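/- arXiv:2108.12754 — 2 statements merged into one kernel-verified Lean document; each statement's English description precedes it below -/
import Mathlib

section
/- Let G be a block graph. Then the set W(G) of weight centers of G is contained in a single block of G; in particular, any two distinct weight centers of G are adjacent in G. -/
open scoped Classical

namespace RadioLabeling

variable {V : Type*} [Fintype V]

/-- The diameter of a graph: maximum distance between two vertices. -/
noncomputable def diam (G : SimpleGraph V) : ℕ :=
  Finset.univ.sup fun p : V × V => G.dist p.1 p.2

/-- A vertex set `S` induces a 2-connected subgraph: the induced subgraph is connected
and contains no cut-vertex. -/
def TwoConn (G : SimpleGraph V) (S : Set V) : Prop :=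
  (G.induce S).Connected ∧ ∀ v ∈ S, (S \ {v} : Set V) = ∅ ∨ (G.induce (S \ {v})).Connected

/-- A block: a maximal 2-connected induced subgraph. -/
def IsBlock (G : SimpleGraph V) (S : Set V) : Prop :=
  TwoConn G S ∧ ∀ T : Set V, S ⊆ T → TwoConn G T → T = S

/-- A block graph: a connected graph each of whose blocks is a clique. -/
def IsBlockGraph (G : SimpleGraph V) : Prop :=
  G.Connected ∧ ∀ S : Set V, IsBlock G S → G.IsClique S

/-- The weight of `G` at `v`: the sum of distances from `v` to all vertices. -/
noncomputable def wt (G : SimpleGraph V) (v : V) : ℕ := ∑ u : V, G.dist u v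

/-- The set of weight centers: vertices minimizing the weight. -/
def weightCenters (G : SimpleGraph V) : Set V := {v | ∀ u : V, wt G v ≤ wt G u}

/-- `nCloser G v u` = number of vertices strictly closer to `v` than to `u`. -/
noncomputable def nCloser (G : SimpleGraph V) (v u : V) : ℕ :=
  (Finset.univ.filter fun z => G.dist v z < G.dist u z).card

/-- A central vertex: either the unique weight center, or (when there are at least two
weight centers) a vertex of the central block, i.e. of a block containing all weight centers. -/
def IsCentral (G : SimpleGraph V) (w : V) : Prop :=
  weightCenters G = {w} ∨
    (2 ≤ (weightCenters G).ncard ∧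
      ∃ S : Set V, IsBlock G S ∧ weightCenters G ⊆ S ∧ w ∈ S)

/-- The level of a vertex: its distance to a nearest central vertex. -/
noncomputable def level (G : SimpleGraph V) (v : V) : ℕ :=
  sInf {n | ∃ w, IsCentral G w ∧ G.dist v w = n}

/-- The total level of `G`. -/
noncomputable def totalLevel (G : SimpleGraph V) : ℕ := ∑ v : V, level G v

/-- `eps G = 1` if `G` has a unique weight center, `0` otherwise. -/
noncomputable def eps (G : SimpleGraph V) : ℕ :=
  if (weightCenters G).ncard = 1 then 1 else 0

/-- A radio labeling: `|f u - f v| ≥ diam G + 1 - dist u v` for all distinct `u`, `v`. -/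
def IsRadioLabeling (G : SimpleGraph V) (f : V → ℕ) : Prop :=
  ∀ u v : V, u ≠ v → diam G + 1 ≤ G.dist u v + max (f u - f v) (f v - f u)

/-- The span of a labeling: the maximum difference of two labels. -/
noncomputable def span (f : V → ℕ) : ℕ :=
  Finset.univ.sup fun p : V × V => f p.1 - f p.2

/-- The radio number: minimum span of a radio labeling. -/
noncomputable def rn (G : SimpleGraph V) : ℕ :=
  sInf {s | ∃ f : V → ℕ, IsRadioLabeling G f ∧ span f = s}

/-- `G` achieves the lower bound `(p-1)(d(G)+ε(G)) - 2L(G) + ε(G)` for the radio number. -/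
def lbEq (G : SimpleGraph V) : Prop :=
  (rn G : ℤ) =
    ((Fintype.card V : ℤ) - 1) * ((diam G : ℤ) + (eps G : ℤ)) -
      2 * (totalLevel G : ℤ) + (eps G : ℤ)

/-- A lower bound block graph: a block graph whose radio number equals the lower bound. -/
def IsLowerBoundBlockGraph (G : SimpleGraph V) : Prop := IsBlockGraph G ∧ lbEq G

/-- `x` lies on a `(u,v)`-geodesic. -/
def OnGeodesic (G : SimpleGraph V) (x u v : V) : Prop :=
  G.dist u v = G.dist u x + G.dist x v

/-- `x` is an ancestor of `v` (and `v` a descendent of `x`): `x` lies on the geodesic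
from some central vertex to `v`. -/
def IsAncestor (G : SimpleGraph V) (x v : V) : Prop :=
  ∃ w : V, IsCentral G w ∧ OnGeodesic G x w v

/-- `phi G u v`: the maximum level of a common ancestor of `u` and `v`. -/
noncomputable def phi (G : SimpleGraph V) (u v : V) : ℕ :=
  sSup {n | ∃ x, IsAncestor G x u ∧ IsAncestor G x v ∧ level G x = n}

/-- `delta G u v = 1` iff the `(u,v)`-geodesic contains two central vertices. -/
noncomputable def delta (G : SimpleGraph V) (u v : V) : ℕ :=
  if ∃ x y : V, x ≠ y ∧ IsCentral G x ∧ IsCentral G y ∧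
      OnGeodesic G x u v ∧ OnGeodesic G y u v
    then 1 else 0

/-- `rho G u v = 0` iff the `(u,v)`-geodesic contains a central vertex or a common
ancestor of `u` and `v`. -/
noncomputable def rho (G : SimpleGraph V) (u v : V) : ℕ :=
  if ∃ x : V, OnGeodesic G x u v ∧
      (IsCentral G x ∨ (IsAncestor G x u ∧ IsAncestor G x v))
    then 0 else 1

/-- The central block: a block containing at least two weight centers, all of them. -/
def IsCentralBlock (G : SimpleGraph V) (D : Set V) : Prop :=
  IsBlock G D ∧ 2 ≤ (weightCenters G).ncard ∧ weightCenters G ⊆ D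

/-- `v` belongs to the branch of `G` determined by the non-central block `D` adjacent to the
central vertex `w`: `v` is a vertex of `D` other than `w`, or a descendent of such a vertex. -/
def InBranch (G : SimpleGraph V) (w : V) (D : Set V) (v : V) : Prop :=
  IsCentral G w ∧ IsBlock G D ∧ w ∈ D ∧ ¬ IsCentralBlock G D ∧
    ∃ u ∈ D, u ≠ w ∧ IsAncestor G u v

/-- Two vertices are in different branches: branches induced by two different blocks
adjacent to the same central vertex. -/
def DifferentBranches (G : SimpleGraph V) (u v : V) : Prop :=
  ∃ w D₁ D₂, D₁ ≠ D₂ ∧ InBranch G w D₁ u ∧ InBranch G w D₂ v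

/-- Two vertices are in opposite branches: branches induced by blocks adjacent to two
different central vertices. -/
def OppositeBranches (G : SimpleGraph V) (u v : V) : Prop :=
  ∃ w₁ w₂ D₁ D₂, w₁ ≠ w₂ ∧ InBranch G w₁ D₁ u ∧ InBranch G w₂ D₂ v

/-- Two vertices lie in the same branch. -/
def SameBranch (G : SimpleGraph V) (u v : V) : Prop :=
  ∃ w D, InBranch G w D u ∧ InBranch G w D v


section Aux
variable {V : Type*} [Fintype V] {G : SimpleGraph V}

set_option linter.unusedSectionVars false

lemma induce_reachable {S : Set V} {u v : V} (p : G.Walk u v)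
    (hS : ∀ a ∈ p.support, a ∈ S) :
    (G.induce S).Reachable ⟨u, hS u p.start_mem_support⟩ ⟨v, hS v p.end_mem_support⟩ := by
  induction p with
  | nil => exact SimpleGraph.Reachable.refl _
  | @cons a b c h q ih =>
      have hb : b ∈ S := hS b (by simp)
      have h1 : (G.induce S).Adj ⟨a, hS a (by simp)⟩ ⟨b, hb⟩ := h
      exact h1.reachable.trans (ih (fun x hx => hS x (by simp [hx])))

lemma induce_connected {S : Set V} {hub : V} (hhub : hub ∈ S)
    (h : ∀ a ∈ S, ∃ p : G.Walk a hub, ∀ b ∈ p.support, b ∈ S) :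
    (G.induce S).Connected := by
  rw [SimpleGraph.connected_iff]
  refine ⟨fun a b => ?_, ⟨⟨hub, hhub⟩⟩⟩
  obtain ⟨a, haS⟩ := a; obtain ⟨b, hbS⟩ := b
  obtain ⟨p, hp⟩ := h a haS
  obtain ⟨q, hq⟩ := h b hbS
  exact (induce_reachable p hp).trans (induce_reachable q hq).symm

lemma side {x m a v : V} (p : G.Walk x m) (hp : p.IsPath) (ha : a ∈ p.support)
    (hav : a ≠ v) :
    (∃ q : G.Walk x a, v ∉ q.support ∧ ∀ b ∈ q.support, b ∈ p.support) ∨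
    (∃ q : G.Walk a m, v ∉ q.support ∧ ∀ b ∈ q.support, b ∈ p.support) := by
  induction p with
  | nil =>
      simp only [SimpleGraph.Walk.mem_support_nil_iff] at ha
      subst ha
      exact Or.inl ⟨SimpleGraph.Walk.nil, by simpa using hav.symm, by simp⟩
  | @cons x0 b m0 h q ih =>
      by_cases hax : a = x0
      · subst hax
        exact Or.inl ⟨SimpleGraph.Walk.nil, by simpa using hav.symm, by simp⟩
      · have haq : a ∈ q.support := by
          have := ha
          simp only [SimpleGraph.Walk.support_cons, List.mem_cons] at this
          tauto
        have hx0q : x0 ∉ q.support := by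
          have := hp.support_nodup
          simp only [SimpleGraph.Walk.support_cons, List.nodup_cons] at this
          exact this.1
        by_cases hvx : v = x0
        · refine Or.inr ⟨q.dropUntil a haq, fun hc => hx0q ?_, fun b hb => by
            simp only [SimpleGraph.Walk.support_cons, List.mem_cons]
            exact Or.inr (SimpleGraph.Walk.support_dropUntil_subset q haq hb)⟩
          rw [hvx] at hc
          exact SimpleGraph.Walk.support_dropUntil_subset q haq hc
        · rcases ih hp.of_cons haq with ⟨q', hq1, hq2⟩ | ⟨q', hq1, hq2⟩
          · refine Or.inl ⟨SimpleGraph.Walk.cons h q', ?_, fun b hb => by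
              simp only [SimpleGraph.Walk.support_cons, List.mem_cons] at hb ⊢
              rcases hb with rfl | hb
              · exact Or.inl rfl
              · exact Or.inr (hq2 b hb)⟩
            simp only [SimpleGraph.Walk.support_cons, List.mem_cons]
            rintro (rfl | hc)
            · exact hvx rfl
            · exact hq1 hc
          · exact Or.inr ⟨q', hq1, fun b hb => by
              simp only [SimpleGraph.Walk.support_cons, List.mem_cons]
              exact Or.inr (hq2 b hb)⟩

lemma twoConn_union_paths {x m : V} (hxm : x ≠ m) (P1 P2 : G.Walk x m)
    (h1 : P1.IsPath) (h2 : P2.IsPath)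
    (hdisj : ∀ a, a ∈ P1.support → a ∈ P2.support → a = x ∨ a = m) :
    TwoConn G {a | a ∈ P1.support ∨ a ∈ P2.support} := by
  set S : Set V := {a | a ∈ P1.support ∨ a ∈ P2.support} with hS
  have hxS : x ∈ S := Or.inl P1.start_mem_support
  have hmS : m ∈ S := Or.inl P1.end_mem_support
  constructor
  · refine induce_connected hxS (fun a ha => ?_)
    rcases ha with ha | ha
    · exact ⟨(P1.takeUntil a ha).reverse, fun b hb => by
        rw [SimpleGraph.Walk.support_reverse, List.mem_reverse] at hb
        exact Or.inl (SimpleGraph.Walk.support_takeUntil_subset P1 ha hb)⟩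
    · exact ⟨(P2.takeUntil a ha).reverse, fun b hb => by
        rw [SimpleGraph.Walk.support_reverse, List.mem_reverse] at hb
        exact Or.inr (SimpleGraph.Walk.support_takeUntil_subset P2 ha hb)⟩
  · intro v hv
    right
    by_cases hvx : v = x
    · subst hvx
      refine induce_connected (hub := m) ⟨hmS, hxm.symm⟩ (fun a ha => ?_)
      obtain ⟨haS, hav⟩ := ha
      have hav' : a ≠ v := fun h => hav (by simp [h])
      rcases haS with ha1 | ha1
      · rcases side P1 h1 ha1 hav' with ⟨q, hq1, hq2⟩ | ⟨q, hq1, hq2⟩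
        · exact absurd q.start_mem_support hq1
        · exact ⟨q, fun b hb => ⟨Or.inl (hq2 b hb), fun hbv => hq1 (by rwa [hbv] at hb)⟩⟩
      · rcases side P2 h2 ha1 hav' with ⟨q, hq1, hq2⟩ | ⟨q, hq1, hq2⟩
        · exact absurd q.start_mem_support hq1
        · exact ⟨q, fun b hb => ⟨Or.inr (hq2 b hb), fun hbv => hq1 (by rwa [hbv] at hb)⟩⟩
    · refine induce_connected (hub := x) ⟨hxS, fun h => hvx (by simpa using h.symm)⟩
        (fun a ha => ?_)
      obtain ⟨haS, hav⟩ := ha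
      have hav' : a ≠ v := fun h => hav (by simp [h])
      have hbridge : v ≠ m → ∃ r : G.Walk m x, v ∉ r.support ∧ ∀ b ∈ r.support, b ∈ S := by
        intro hvm
        have : v ∉ P1.support ∨ v ∉ P2.support := by
          by_contra hc
          push_neg at hc
          rcases hdisj v hc.1 hc.2 with h | h
          · exact hvx h
          · exact hvm h
        rcases this with h | h
        · exact ⟨P1.reverse, by rwa [SimpleGraph.Walk.support_reverse, List.mem_reverse],
            fun b hb => by
            rw [SimpleGraph.Walk.support_reverse, List.mem_reverse] at hb; exact Or.inl hb⟩
        · exact ⟨P2.reverse, by rwa [SimpleGraph.Walk.support_reverse, List.mem_reverse],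
            fun b hb => by
            rw [SimpleGraph.Walk.support_reverse, List.mem_reverse] at hb; exact Or.inr hb⟩
      have main : ∀ (P : G.Walk x m), P.IsPath → a ∈ P.support →
          (∀ b ∈ P.support, b ∈ S) →
          ∃ q : G.Walk a x, v ∉ q.support ∧ ∀ b ∈ q.support, b ∈ S := by
        intro P hP haP hPS
        rcases side P hP haP hav' with ⟨q, hq1, hq2⟩ | ⟨q, hq1, hq2⟩
        · exact ⟨q.reverse, by rwa [SimpleGraph.Walk.support_reverse, List.mem_reverse],
            fun b hb => by
            rw [SimpleGraph.Walk.support_reverse, List.mem_reverse] at hb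
            exact hPS b (hq2 b hb)⟩
        · have hvm : v ≠ m := fun h => hq1 (by rw [h]; exact q.end_mem_support)
          obtain ⟨r, hr1, hr2⟩ := hbridge hvm
          refine ⟨q.append r, ?_, fun b hb => ?_⟩
          · rw [SimpleGraph.Walk.mem_support_append_iff]
            rintro (h | h)
            · exact hq1 h
            · exact hr1 h
          · rw [SimpleGraph.Walk.mem_support_append_iff] at hb
            rcases hb with h | h
            · exact hPS b (hq2 b h)
            · exact hr2 b h
      rcases haS with ha1 | ha1
      · obtain ⟨q, hq1, hq2⟩ := main P1 h1 ha1 (fun b hb => Or.inl hb)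
        exact ⟨q, fun b hb => ⟨hq2 b hb, fun hbv => hq1 (by rwa [hbv] at hb)⟩⟩
      · obtain ⟨q, hq1, hq2⟩ := main P2 h2 ha1 (fun b hb => Or.inr hb)
        exact ⟨q, fun b hb => ⟨hq2 b hb, fun hbv => hq1 (by rwa [hbv] at hb)⟩⟩

lemma exists_block_superset {S : Set V} (hS : TwoConn G S) :
    ∃ T : Set V, IsBlock G T ∧ S ⊆ T := by
  have H : ∀ (k : ℕ) (S : Set V), TwoConn G S → Fintype.card V - S.ncard = k →
      ∃ T, IsBlock G T ∧ S ⊆ T := by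
    intro k
    induction k using Nat.strong_induction_on with
    | _ k ih =>
      intro S hS hk
      by_cases hmax : ∀ T, S ⊆ T → TwoConn G T → T = S
      · exact ⟨S, ⟨hS, hmax⟩, subset_rfl⟩
      · push_neg at hmax
        obtain ⟨T, hST, hT, hne⟩ := hmax
        have hlt : S.ncard < T.ncard :=
          Set.ncard_lt_ncard (Set.ssubset_iff_subset_ne.mpr ⟨hST, Ne.symm hne⟩) (Set.toFinite T)
        have hTle : T.ncard ≤ Fintype.card V := by
          have := Set.ncard_le_ncard (Set.subset_univ T) Set.finite_univ
          rwa [Set.ncard_univ, Nat.card_eq_fintype_card] at this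
        obtain ⟨T', hT', hTT'⟩ := ih (Fintype.card V - T.ncard) (by omega) T hT rfl
        exact ⟨T', hT', hST.trans hTT'⟩
  exact H _ S hS rfl

lemma twoConn_clique (hG : IsBlockGraph G) {S : Set V} (hS : TwoConn G S) :
    G.IsClique S := by
  obtain ⟨T, hT, hST⟩ := exists_block_superset hS
  exact (hG.2 T hT).subset hST

lemma clique_twoConn {S : Set V} (hne : S.Nonempty) (hcl : G.IsClique S) : TwoConn G S := by
  have conn : ∀ (T : Set V), T.Nonempty → G.IsClique T → (G.induce T).Connected := by
    rintro T ⟨t, ht⟩ hcl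
    rw [SimpleGraph.connected_iff]
    refine ⟨fun a b => ?_, ⟨⟨t, ht⟩⟩⟩
    obtain ⟨a, ha⟩ := a; obtain ⟨b, hb⟩ := b
    by_cases hab : a = b
    · subst hab; rfl
    · have h1 : (G.induce T).Adj ⟨a, ha⟩ ⟨b, hb⟩ := hcl ha hb hab
      exact h1.reachable
  refine ⟨conn S hne hcl, fun v hv => ?_⟩
  by_cases h : (S \ {v} : Set V) = ∅
  · exact Or.inl h
  · exact Or.inr (conn _ (Set.nonempty_iff_ne_empty.mpr h) (hcl.subset Set.diff_subset))

lemma dist_add_dist_le_of_mem {u v a : V} (p : G.Walk u v) (ha : a ∈ p.support) :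
    G.dist u a + G.dist a v ≤ p.length := by
  have h1 := SimpleGraph.dist_le (p.takeUntil a ha)
  have h2 := SimpleGraph.dist_le (p.dropUntil a ha)
  have h3 : (p.takeUntil a ha).length + (p.dropUntil a ha).length = p.length := by
    have := congrArg SimpleGraph.Walk.length (p.take_spec ha)
    rwa [SimpleGraph.Walk.length_append] at this
  omega

lemma firstmeet {c y : V} (Q : G.Walk c y) (pred : V → Prop) (hy : pred y) :
    ∃ (m : V) (q : G.Walk c m) (r : G.Walk m y), q.append r = Q ∧ pred m ∧
      ∀ b ∈ q.support, pred b → b = m := by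
  induction Q with
  | nil =>
      exact ⟨_, SimpleGraph.Walk.nil, SimpleGraph.Walk.nil, rfl, hy, by
        intro b hb _; simpa using hb⟩
  | @cons c0 b0 y0 h q ih =>
      by_cases hc : pred c0
      · exact ⟨c0, SimpleGraph.Walk.nil, SimpleGraph.Walk.cons h q, rfl, hc, by
          intro b hb _; simpa using hb⟩
      · obtain ⟨m, q', r, happ, hm, hfirst⟩ := ih hy
        refine ⟨m, SimpleGraph.Walk.cons h q', r, by rw [SimpleGraph.Walk.cons_append, happ],
          hm, ?_⟩
        intro b hb hpred
        simp only [SimpleGraph.Walk.support_cons, List.mem_cons] at hb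
        rcases hb with rfl | hb
        · exact absurd hpred hc
        · exact hfirst b hb hpred

lemma geodesic_path {u v : V} (hr : G.Reachable u v) :
    ∃ p : G.Walk u v, p.IsPath ∧ p.length = G.dist u v := by
  obtain ⟨w, hw⟩ := hr.exists_walk_length_eq_dist
  refine ⟨w.bypass, w.bypass_isPath, le_antisymm ?_ (SimpleGraph.dist_le _)⟩
  calc w.bypass.length ≤ w.length := w.length_bypass_le
  _ = G.dist u v := hw

/-- In a block graph, the neighbor of `x` on a geodesic towards `y` (at distance ≥ 2)
lies on every walk from `x` to `y`. -/
lemma cut_neighbor (hG : IsBlockGraph G) {x y : V} (h2 : 2 ≤ G.dist x y) :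
    ∃ c, G.Adj x c ∧ G.dist c y + 1 = G.dist x y ∧ ∀ (W : G.Walk x y), c ∈ W.support := by
  have hconn := hG.1
  obtain ⟨w, hw⟩ := hconn.exists_walk_length_eq_dist x y
  cases w with
  | nil => simp at hw; simp at h2
  | @cons _ c _ hxc q =>
      have hlen : q.length + 1 = G.dist x y := by
        simpa [Nat.add_comm] using hw
      have hcy : G.dist c y + 1 = G.dist x y := by
        have hle : G.dist c y ≤ q.length := SimpleGraph.dist_le q
        have hxc1 : G.dist x c = 1 := SimpleGraph.dist_eq_one_iff_adj.mpr hxc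
        have htri : G.dist x y ≤ G.dist x c + G.dist c y := hconn.dist_triangle
        omega
      refine ⟨c, hxc, hcy, fun W => ?_⟩
      by_contra hc
      -- P : path x→y avoiding c
      set P := W.bypass with hPdef
      have hPpath : P.IsPath := W.bypass_isPath
      have hcP : c ∉ P.support := fun h => hc (W.support_bypass_subset h)
      -- Qc : geodesic path c→y
      obtain ⟨Qc, hQcpath, hQclen⟩ := geodesic_path (hconn c y)
      have hQx : ∀ a ∈ Qc.support, a ≠ x := by
        intro a ha hax
        have := dist_add_dist_le_of_mem Qc ha
        rw [hQclen] at this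
        subst hax
        omega
      obtain ⟨m, qpre, r, happ, hmP, hfirst⟩ := firstmeet Qc (· ∈ P.support)
        P.end_mem_support
      have hqpre_sub : ∀ b ∈ qpre.support, b ∈ Qc.support := by
        intro b hb
        rw [← happ, SimpleGraph.Walk.mem_support_append_iff]
        exact Or.inl hb
      have hmQc : m ∈ Qc.support := hqpre_sub m qpre.end_mem_support
      have hmx : m ≠ x := hQx m hmQc
      have hmc : m ≠ c := fun h => hcP (h ▸ hmP)
      have hcm_pos : 1 ≤ G.dist c m :=
        (hconn c m).pos_dist_of_ne (Ne.symm hmc)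
      have hsplit : G.dist c m + G.dist m y ≤ G.dist c y := by
        have h1 := SimpleGraph.dist_le qpre
        have h2 := SimpleGraph.dist_le r
        have h3 : qpre.length + r.length = Qc.length := by
          have := congrArg SimpleGraph.Walk.length happ
          rwa [SimpleGraph.Walk.length_append] at this
        omega
      have hnadj : ¬ G.Adj x m := by
        intro hadj
        have h1 : G.dist x m = 1 := SimpleGraph.dist_eq_one_iff_adj.mpr hadj
        have htri : G.dist x y ≤ G.dist x m + G.dist m y := hconn.dist_triangle
        omega
      -- two internally disjoint paths from x to m
      have hP1path : (P.takeUntil m hmP).IsPath := hPpath.takeUntil hmP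
      have hqpre_path : qpre.IsPath := by
        rw [← happ] at hQcpath
        exact hQcpath.of_append_left
      have hP2path : (SimpleGraph.Walk.cons hxc qpre).IsPath := by
        refine hqpre_path.cons ?_
        intro hx
        exact hQx x (hqpre_sub x hx) rfl
      have hdisj : ∀ a, a ∈ (P.takeUntil m hmP).support →
          a ∈ (SimpleGraph.Walk.cons hxc qpre).support → a = x ∨ a = m := by
        intro a ha1 ha2
        simp only [SimpleGraph.Walk.support_cons, List.mem_cons] at ha2
        rcases ha2 with rfl | ha2
        · exact Or.inl rfl
        · exact Or.inr (hfirst a ha2 (P.support_takeUntil_subset hmP ha1))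
      have htc := twoConn_union_paths (Ne.symm hmx) (P.takeUntil m hmP)
        (SimpleGraph.Walk.cons hxc qpre) hP1path hP2path hdisj
      have hclique := twoConn_clique hG htc
      have hxmem : x ∈ {a | a ∈ (P.takeUntil m hmP).support ∨
          a ∈ (SimpleGraph.Walk.cons hxc qpre).support} :=
        Or.inl (P.takeUntil m hmP).start_mem_support
      have hmmem : m ∈ {a | a ∈ (P.takeUntil m hmP).support ∨
          a ∈ (SimpleGraph.Walk.cons hxc qpre).support} :=
        Or.inl (P.takeUntil m hmP).end_mem_support
      exact hnadj (hclique hxmem hmmem (Ne.symm hmx))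

/-- The key structural lemma. -/
lemma key_lemma (hG : IsBlockGraph G) {x y : V} (h2 : 2 ≤ G.dist x y) :
    ∃ c, G.Adj x c ∧ G.dist c y + 1 = G.dist x y ∧
      ∀ z, G.dist z x ≤ G.dist z c → G.dist z y = G.dist z c + G.dist c y := by
  have hconn := hG.1
  obtain ⟨c, hadj, hd, hcut⟩ := cut_neighbor hG h2
  refine ⟨c, hadj, hd, fun z hz => ?_⟩
  have htri : G.dist z y ≤ G.dist z c + G.dist c y := hconn.dist_triangle
  by_contra hne
  have hlt : G.dist z y < G.dist z c + G.dist c y := lt_of_le_of_ne htri hne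
  obtain ⟨pzx, _, hpzx⟩ := geodesic_path (hconn z x)
  obtain ⟨pzy, _, hpzy⟩ := geodesic_path (hconn z y)
  have hc1 : c ∉ pzx.support := by
    intro hmem
    have := dist_add_dist_le_of_mem pzx hmem
    rw [hpzx] at this
    have hcx : G.dist c x = 1 := by
      rw [SimpleGraph.dist_comm]; exact SimpleGraph.dist_eq_one_iff_adj.mpr hadj
    omega
  have hc2 : c ∉ pzy.support := by
    intro hmem
    have := dist_add_dist_le_of_mem pzy hmem
    rw [hpzy] at this
    omega
  have hcW := hcut (pzx.reverse.append pzy)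
  rw [SimpleGraph.Walk.mem_support_append_iff, SimpleGraph.Walk.support_reverse,
    List.mem_reverse] at hcW
  rcases hcW with h | h
  · exact hc1 h
  · exact hc2 h

/-- Counting lemma: a weight center has at least half of the vertices on its side. -/
lemma half_card {x c : V} (hconn : G.Connected) (hadj : G.Adj x c)
    (hwt : wt G x ≤ wt G c) :
    Fintype.card V ≤ 2 * (Finset.univ.filter fun z => G.dist z x ≤ G.dist z c).card := by
  classical
  set A := Finset.univ.filter fun z => G.dist z x ≤ G.dist z c with hA
  set A' := Finset.univ.filter fun z => G.dist z c < G.dist z x with hA'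
  have hcard : A.card + A'.card = Fintype.card V := by
    simpa using Finset.card_filter_add_card_filter_not
      (s := Finset.univ) (p := fun z => G.dist z x ≤ G.dist z c)
  have hxc1 : G.dist x c = 1 := SimpleGraph.dist_eq_one_iff_adj.mpr hadj
  have hcx1 : G.dist c x = 1 := by rwa [SimpleGraph.dist_comm] at hxc1
  have hsum : ∑ z, G.dist z x ≤ ∑ z, G.dist z c := hwt
  have hsplitx : ∑ z ∈ A, G.dist z x + ∑ z ∈ A', G.dist z x = ∑ z, G.dist z x := by
    simpa using Finset.sum_filter_add_sum_filter_not Finset.univ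
      (fun z => G.dist z x ≤ G.dist z c) (fun z => G.dist z x)
  have hsplitc : ∑ z ∈ A, G.dist z c + ∑ z ∈ A', G.dist z c = ∑ z, G.dist z c := by
    simpa using Finset.sum_filter_add_sum_filter_not Finset.univ
      (fun z => G.dist z x ≤ G.dist z c) (fun z => G.dist z c)
  have hA'mem : ∀ z ∈ A', G.dist z x = G.dist z c + 1 := by
    intro z hz
    rw [hA', Finset.mem_filter] at hz
    have htri : G.dist z x ≤ G.dist z c + G.dist c x := hconn.dist_triangle
    have h2 := hz.2
    omega
  have hAmem : ∀ z ∈ A, G.dist z c ≤ G.dist z x + 1 := by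
    intro z hz
    have htri : G.dist z c ≤ G.dist z x + G.dist x c := hconn.dist_triangle
    omega
  have e1 : ∑ z ∈ A', G.dist z x = ∑ z ∈ A', G.dist z c + A'.card := by
    rw [Finset.sum_congr rfl hA'mem, Finset.sum_add_distrib, Finset.sum_const,
      smul_eq_mul, mul_one]
  have e2 : ∑ z ∈ A, G.dist z c ≤ ∑ z ∈ A, G.dist z x + A.card := by
    calc ∑ z ∈ A, G.dist z c ≤ ∑ z ∈ A, (G.dist z x + 1) := Finset.sum_le_sum hAmem
    _ = ∑ z ∈ A, G.dist z x + A.card := by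
        rw [Finset.sum_add_distrib, Finset.sum_const, smul_eq_mul, mul_one]
  omega

end Aux


/-- In a block graph the set of weight centers is contained in a single block;
in particular any two distinct weight centers are adjacent. -/
theorem stmt2 {V : Type*} [Fintype V] (G : SimpleGraph V) (hG : IsBlockGraph G) :
    (∃ S : Set V, IsBlock G S ∧ weightCenters G ⊆ S) ∧
      ∀ x ∈ weightCenters G, ∀ y ∈ weightCenters G, x ≠ y → G.Adj x y := by
  classical
  have hconn := hG.1
  have hadj : ∀ x ∈ weightCenters G, ∀ y ∈ weightCenters G, x ≠ y → G.Adj x y := by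
    intro x hx y hy hxy
    by_contra hnadj
    have hd1 : 0 < G.dist x y := hconn.pos_dist_of_ne hxy
    have hdne : G.dist x y ≠ 1 := fun h => hnadj (SimpleGraph.dist_eq_one_iff_adj.mp h)
    have hd2 : 2 ≤ G.dist x y := by omega
    obtain ⟨c, hc_adj, hc_d, hcP⟩ := key_lemma hG hd2
    have hd2' : 2 ≤ G.dist y x := by rwa [SimpleGraph.dist_comm] at hd2
    obtain ⟨c', hc'_adj, hc'_d, hc'P⟩ := key_lemma hG hd2'
    have hc'dx : G.dist c' x + 1 = G.dist x y := by
      have e1 : G.dist x c' = G.dist c' x := SimpleGraph.dist_comm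
      have e2 : G.dist y x = G.dist x y := SimpleGraph.dist_comm
      omega
    set A := Finset.univ.filter (fun z => G.dist z x ≤ G.dist z c) with hA
    set B := Finset.univ.filter (fun z => G.dist z y ≤ G.dist z c') with hB
    have h2A : Fintype.card V ≤ 2 * A.card := half_card hconn hc_adj (hx c)
    have h2B : Fintype.card V ≤ 2 * B.card := half_card hconn hc'_adj (hy c')
    have hcx1 : G.dist c x = 1 := by
      rw [SimpleGraph.dist_comm]
      exact SimpleGraph.dist_eq_one_iff_adj.mpr hc_adj
    have hdisj : Disjoint A B := by
      rw [Finset.disjoint_left]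
      intro z hzA hzB
      rw [hA, Finset.mem_filter] at hzA
      rw [hB, Finset.mem_filter] at hzB
      have e1 := hcP z hzA.2
      have e2 := hc'P z hzB.2
      have h1 := hzA.2
      have h2 := hzB.2
      omega
    have hcA : c ∉ A := by
      rw [hA, Finset.mem_filter]
      rintro ⟨-, h⟩
      have h0 : G.dist c c = 0 := SimpleGraph.dist_self
      omega
    have hcB : c ∉ B := by
      rw [hB, Finset.mem_filter]
      rintro ⟨-, h⟩
      have e := hc'P c h
      omega
    have hunion : (A ∪ B).card = A.card + B.card := Finset.card_union_of_disjoint hdisj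
    have hsub : A ∪ B ⊆ Finset.univ.erase c := by
      intro z hz
      rw [Finset.mem_erase]
      refine ⟨?_, Finset.mem_univ z⟩
      rintro rfl
      rcases Finset.mem_union.mp hz with h | h
      · exact hcA h
      · exact hcB h
    have hle := Finset.card_le_card hsub
    rw [Finset.card_erase_of_mem (Finset.mem_univ c), Finset.card_univ] at hle
    have hn : 0 < Fintype.card V := Fintype.card_pos_iff.mpr hconn.nonempty
    omega
  refine ⟨?_, hadj⟩
  have hne : (weightCenters G).Nonempty := by
    obtain ⟨v⟩ := hconn.nonempty
    obtain ⟨w, -, hw⟩ := Finset.exists_min_image Finset.univ (wt G) ⟨v, Finset.mem_univ v⟩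
    exact ⟨w, fun u => hw u (Finset.mem_univ u)⟩
  have hcl : G.IsClique (weightCenters G) := fun a ha b hb hab => hadj a ha b hb hab
  obtain ⟨T, hT, hsub⟩ := exists_block_superset (clique_twoConn hne hcl)
  exact ⟨T, hT, hsub⟩

end RadioLabeling
end

section
/- Let T be a tree with |W(T)| = |W(𝓛(T))| = 1 and write W(𝓛(T)) = {w}. Then: (i) 𝓛(T) consists of exactly two branches at w, namely B(T) − w and 𝓛(T) − B(T); and (ii) |V(B(T))| ≤ ⌊(|V(T)|−1)/2⌋. -/
open scoped Classical

namespace RadioLabeling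

variable {V : Type*} [Fintype V]

noncomputable instance edgeSetFintype (G : SimpleGraph V) : Fintype G.edgeSet :=
  Set.Finite.fintype (Set.toFinite _)

/-- The set `B(T)` of vertices of the line graph of `T` (i.e. edges of `T`): the vertex `w`
(the unique weight center of the line graph) together with all edges of `T` whose far endpoint
is a descendant, in `T` rooted at its weight center `r`, of the far endpoint of `w`;
equivalently, the edges `e` having an endpoint `x` such that both endpoints of `w` lie on the
`(r,x)`-geodesic in `T`. -/
def edgeDescSet (T : SimpleGraph V) (r : V) (w : T.edgeSet) : Set T.edgeSet :=
  {e | e = w ∨ ∃ x ∈ (e : Sym2 V), ∀ y ∈ (w : Sym2 V), T.dist r x = T.dist r y + T.dist y x}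

open SimpleGraph Walk


section Aux

variable {V : Type*} {G : SimpleGraph V}

lemma aux_dist_le_one_of_mem_edge {e : Sym2 V} (he : e ∈ G.edgeSet)
    {u v : V} (hu : u ∈ e) (hv : v ∈ e) : G.dist u v ≤ 1 := by
  induction e using Sym2.ind with
  | _ a b =>
    rw [Sym2.mem_iff] at hu hv
    rw [SimpleGraph.mem_edgeSet] at he
    rcases hu with rfl|rfl <;> rcases hv with rfl|rfl <;>
      simp [dist_self, (dist_eq_one_iff_adj).2, he, he.symm]

lemma aux_dist_add_dist_le_of_mem_support {u v x : V} (p : G.Walk u v)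
    (hx : x ∈ p.support) : G.dist u x + G.dist x v ≤ p.length := by
  have h := p.take_spec hx
  have h2 := congrArg Walk.length h
  rw [Walk.length_append] at h2
  have h3 : G.dist u x ≤ (p.takeUntil x hx).length := dist_le _
  have h4 : G.dist x v ≤ (p.dropUntil x hx).length := dist_le _
  omega

lemma aux_exists_adj_dist (hc : G.Connected) {u v : V} (h : u ≠ v) :
    ∃ x, G.Adj u x ∧ G.dist u v = G.dist x v + 1 := by
  obtain ⟨p, hp⟩ := hc.exists_walk_length_eq_dist u v
  cases p with
  | nil => exact absurd rfl h
  | @cons _ x _ ha q =>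
    refine ⟨x, ha, ?_⟩
    have h1 : G.dist x v ≤ q.length := dist_le q
    have h2 : G.dist u v ≤ G.dist u x + G.dist x v := hc.dist_triangle
    have h3 : G.dist u x ≤ 1 := (dist_eq_one_iff_adj.2 ha).le
    rw [Walk.length_cons] at hp
    omega

lemma aux_dist_split (hc : G.Connected) {u v x : V}
    (hall : ∀ p : G.Walk u v, x ∈ p.support) :
    G.dist u v = G.dist u x + G.dist x v := by
  obtain ⟨p, hp⟩ := hc.exists_walk_length_eq_dist u v
  have h1 := aux_dist_add_dist_le_of_mem_support p (hall p)
  have h2 : G.dist u v ≤ G.dist u x + G.dist x v := hc.dist_triangle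
  omega

lemma aux_sym2_exists (e : Sym2 V) : ∃ a b, e = s(a,b) := by
  induction e using Sym2.ind with
  | _ a b => exact ⟨a, b, rfl⟩

lemma aux_sym2_eq {e : Sym2 V} {x y : V} (hx : x ∈ e) (hy : y ∈ e) (hne : x ≠ y) :
    e = s(x,y) := by
  induction e using Sym2.ind with
  | _ a b =>
    rw [Sym2.mem_iff] at hx hy
    rcases hx with rfl|rfl <;> rcases hy with rfl|rfl <;> first
      | exact absurd rfl hne
      | rfl
      | exact Sym2.eq_swap

end Aux



section TreeAux
variable {V : Type*} {T : SimpleGraph V}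

lemma aux_concat_isPath {u v x : V} {p : T.Walk u v} (hp : p.IsPath) (h : T.Adj v x)
    (hx : x ∉ p.support) : (p.concat h).IsPath := by
  rw [← isPath_reverse_iff, reverse_concat]
  refine (cons_isPath_iff _ _).2 ⟨hp.reverse, ?_⟩
  simpa [Walk.support_reverse] using hx

lemma tree_dist_adj (hT : T.IsTree) {a b : V} (hab : T.Adj a b) (v : V) :
    T.dist v b = T.dist v a + 1 ∨ T.dist v a = T.dist v b + 1 := by
  have hc := hT.isConnected
  have h1 : T.dist v b ≤ T.dist v a + 1 := by
    have := hc.dist_triangle (u := v) (v := a) (w := b)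
    have := (SimpleGraph.dist_eq_one_iff_adj.2 hab).le
    omega
  have h2 : T.dist v a ≤ T.dist v b + 1 := by
    have := hc.dist_triangle (u := v) (v := b) (w := a)
    have := (SimpleGraph.dist_eq_one_iff_adj.2 hab.symm).le
    omega
  rcases Nat.lt_trichotomy (T.dist v a) (T.dist v b) with h|h|h
  · left; omega
  · exfalso
    -- equal distances: contradiction
    obtain ⟨p, hp, hpl⟩ := hc.exists_path_of_dist v a
    by_cases hb : b ∈ p.support
    · have := aux_dist_add_dist_le_of_mem_support p hb
      have hba : T.dist b a = 1 := SimpleGraph.dist_eq_one_iff_adj.2 hab.symm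
      omega
    · have hq : (p.concat hab).IsPath := aux_concat_isPath hp hab hb
      obtain ⟨q, hqp, hql⟩ := hc.exists_path_of_dist v b
      have := (hT.existsUnique_path v b).unique hq hqp
      have := congrArg Walk.length this
      rw [Walk.length_concat] at this
      omega
  · right; omega

lemma tree_no_triangle (hT : T.IsTree) {a b c : V}
    (h1 : T.Adj a b) (h2 : T.Adj b c) (h3 : T.Adj a c) : False := by
  have hp1 : (Walk.cons h3 Walk.nil : T.Walk a c).IsPath := by simp [h3.ne]
  have hp2 : (Walk.cons h1 (Walk.cons h2 Walk.nil) : T.Walk a c).IsPath := by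
    simp [h1.ne, h2.ne, h3.ne]
  have := (hT.existsUnique_path a c).unique hp1 hp2
  have := congrArg Walk.length this
  simp at this

lemma tree_unique_parent (hT : T.IsTree) {r x y y' : V} (hy : T.Adj y x) (hy' : T.Adj y' x)
    (h1 : T.dist r x = T.dist r y + 1) (h2 : T.dist r x = T.dist r y' + 1) : y = y' := by
  have hc := hT.isConnected
  obtain ⟨p, hp, hpl⟩ := hc.exists_path_of_dist r y
  obtain ⟨p', hp', hpl'⟩ := hc.exists_path_of_dist r y'
  have hxp : x ∉ p.support := by
    intro hx
    have := aux_dist_add_dist_le_of_mem_support p hx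
    have hxy : T.dist x y = 1 := SimpleGraph.dist_eq_one_iff_adj.2 hy.symm
    omega
  have hxp' : x ∉ p'.support := by
    intro hx
    have := aux_dist_add_dist_le_of_mem_support p' hx
    have hxy : T.dist x y' = 1 := SimpleGraph.dist_eq_one_iff_adj.2 hy'.symm
    omega
  have hQ : (p.concat hy).IsPath := aux_concat_isPath hp hy hxp
  have hQ' : (p'.concat hy').IsPath := aux_concat_isPath hp' hy' hxp'
  have heq := (hT.existsUnique_path r x).unique hQ hQ'
  have hy'mem : y' ∈ (p.concat hy).support := by
    rw [heq, Walk.support_concat]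
    exact List.mem_append_left _ (Walk.end_mem_support p')
  rw [Walk.support_concat, List.mem_append] at hy'mem
  rcases hy'mem with hmem | hmem
  · have := aux_dist_add_dist_le_of_mem_support p hmem
    have : T.dist y' y = 0 := by omega
    exact (hc.dist_eq_zero_iff.1 this).symm
  · exact absurd (List.mem_singleton.1 hmem) hy'.ne

/-- If an edge `{x,y}` has `x` strictly on `c`'s side and `y` strictly on `d`'s side of
the tree edge `{c,d}`, then `x = c` and `y = d`. -/
lemma tree_cross_edge (hT : T.IsTree) {c d x y : V} (hcd : T.Adj c d) (hxy : T.Adj x y)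
    (hx : T.dist x d = T.dist x c + 1) (hy : T.dist y c = T.dist y d + 1) :
    x = c ∧ y = d := by
  have hc := hT.isConnected
  have e1 : T.dist x d ≤ 1 + T.dist y d := by
    have := hc.dist_triangle (u := x) (v := y) (w := d)
    have := (SimpleGraph.dist_eq_one_iff_adj.2 hxy).le
    omega
  have e2 : T.dist y c ≤ 1 + T.dist x c := by
    have := hc.dist_triangle (u := y) (v := x) (w := c)
    have := (SimpleGraph.dist_eq_one_iff_adj.2 hxy.symm).le
    omega
  have hk : T.dist x c = T.dist y d := by omega
  obtain ⟨q, hq, hql⟩ := hc.exists_path_of_dist y d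
  obtain ⟨p, hp, hpl⟩ := hc.exists_path_of_dist x c
  have hW1 : (Walk.cons hxy q).length = T.dist x d := by
    rw [Walk.length_cons]; omega
  have hW2 : ((p.concat hcd)).length = T.dist x d := by
    rw [Walk.length_concat]; omega
  have hP1 : (Walk.cons hxy q).IsPath := Walk.isPath_of_length_eq_dist _ hW1
  have hP2 : (p.concat hcd).IsPath := Walk.isPath_of_length_eq_dist _ hW2
  have heq := (hT.existsUnique_path x d).unique hP1 hP2
  have hymem : y ∈ (p.concat hcd).support := by
    rw [← heq, Walk.support_cons]
    exact List.mem_cons_of_mem _ (Walk.start_mem_support q)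
  rw [Walk.support_concat, List.mem_append] at hymem
  rcases hymem with hmem | hmem
  · exfalso
    have := aux_dist_add_dist_le_of_mem_support p hmem
    have hxy1 : T.dist x y = 1 := SimpleGraph.dist_eq_one_iff_adj.2 hxy
    omega
  · have hyd : y = d := List.mem_singleton.1 hmem
    have h0 : T.dist y d = 0 := by rw [hyd]; exact dist_self
    have hxc : T.dist x c = 0 := by omega
    exact ⟨hc.dist_eq_zero_iff.1 hxc, hyd⟩

end TreeAux

section LineAux
variable {V : Type*} {T : SimpleGraph V}

lemma adj_of_edge {e : T.edgeSet} {x y : V} (h : (e : Sym2 V) = s(x, y)) : T.Adj x y := by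
  have he := e.prop
  rw [h] at he
  exact he

/-- Any tree walk from a vertex on `c`'s side to a vertex on `d`'s side passes through `d`. -/
lemma tree_walk_through {c d : V} (hT : T.IsTree) (hcd : T.Adj c d) :
    ∀ {u v : V} (p : T.Walk u v), T.dist u d = T.dist u c + 1 →
      T.dist v c = T.dist v d + 1 → d ∈ p.support := by
  intro u v p
  induction p with
  | nil => intro h1 h2; exfalso; omega
  | @cons u x v hxy q ih =>
    intro h1 h2
    rcases tree_dist_adj hT hcd x with hx | hx
    · exact List.mem_cons_of_mem _ (ih hx h2)
    · obtain ⟨-, hxd⟩ := tree_cross_edge hT hcd hxy h1 hx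
      exact List.mem_cons_of_mem _ (hxd ▸ Walk.start_mem_support q)

lemma tree_desc_iff (hT : T.IsTree) {c d : V} (hcd : T.Adj c d) {r : V}
    (hr : T.dist r d = T.dist r c + 1) (v : V) :
    T.dist v c = T.dist v d + 1 ↔ T.dist r v = T.dist r d + T.dist d v := by
  have hc := hT.isConnected
  constructor
  · intro hv
    exact aux_dist_split hc (fun p => tree_walk_through hT hcd p hr hv)
  · intro hv
    rcases tree_dist_adj hT hcd v with h | h
    · exfalso
      have h1 : T.dist d v = T.dist v d := SimpleGraph.dist_comm ..
      have h2 : T.dist c v = T.dist v c := SimpleGraph.dist_comm ..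
      have h3 : T.dist r v ≤ T.dist r c + T.dist c v := hc.dist_triangle
      omega
    · exact h

/-- Minimum distance in `T` between endpoints of two edges. -/
noncomputable def mm (T : SimpleGraph V) (e f : T.edgeSet) : ℕ :=
  sInf {n | ∃ x ∈ (e : Sym2 V), ∃ y ∈ (f : Sym2 V), T.dist x y = n}

lemma mm_set_nonempty (e f : T.edgeSet) :
    {n | ∃ x ∈ (e : Sym2 V), ∃ y ∈ (f : Sym2 V), T.dist x y = n}.Nonempty := by
  obtain ⟨a, b, hab⟩ := aux_sym2_exists (e : Sym2 V)
  obtain ⟨a', b', hab'⟩ := aux_sym2_exists (f : Sym2 V)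
  exact ⟨T.dist a a', a, by rw [hab]; exact Sym2.mem_mk_left a b,
    a', by rw [hab']; exact Sym2.mem_mk_left a' b', rfl⟩

lemma mm_spec (e f : T.edgeSet) :
    ∃ x ∈ (e : Sym2 V), ∃ y ∈ (f : Sym2 V), T.dist x y = mm T e f :=
  Nat.sInf_mem (mm_set_nonempty e f)

lemma mm_le {e f : T.edgeSet} {x y : V} (hx : x ∈ (e : Sym2 V)) (hy : y ∈ (f : Sym2 V)) :
    mm T e f ≤ T.dist x y :=
  Nat.sInf_le ⟨x, hx, y, hy, rfl⟩

lemma le_mm {e f : T.edgeSet} {k : ℕ}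
    (h : ∀ x ∈ (e : Sym2 V), ∀ y ∈ (f : Sym2 V), k ≤ T.dist x y) : k ≤ mm T e f :=
  le_csInf (mm_set_nonempty e f) (by rintro n ⟨x, hx, y, hy, rfl⟩; exact h x hx y hy)

lemma L_adj {e f : T.edgeSet} (hne : e ≠ f) {z : V}
    (hz1 : z ∈ (e : Sym2 V)) (hz2 : z ∈ (f : Sym2 V)) : (SimpleGraph.lineGraph T).Adj e f :=
  lineGraph_adj_iff_exists.2 ⟨hne, z, hz1, hz2⟩

lemma L_dist_le_one {e f : T.edgeSet} {z : V}
    (hz1 : z ∈ (e : Sym2 V)) (hz2 : z ∈ (f : Sym2 V)) :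
    (SimpleGraph.lineGraph T).dist e f ≤ 1 := by
  rcases eq_or_ne e f with rfl | hne
  · simp [SimpleGraph.dist_self]
  · exact (SimpleGraph.dist_eq_one_iff_adj.2 (L_adj hne hz1 hz2)).le

lemma L_reachable (hT : T.IsTree) (e f : T.edgeSet) :
    (SimpleGraph.lineGraph T).Reachable e f := by
  have hc := hT.isConnected
  have key : ∀ n (e f : T.edgeSet), mm T e f ≤ n → (SimpleGraph.lineGraph T).Reachable e f := by
    intro n
    induction n with
    | zero =>
      intro e f h0
      obtain ⟨x, hx, y, hy, hxy⟩ := mm_spec e f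
      have : x = y := hc.dist_eq_zero_iff.1 (by omega)
      subst this
      rcases eq_or_ne e f with rfl | hne
      · exact SimpleGraph.Reachable.refl _
      · exact (L_adj hne hx hy).reachable
    | succ n ih =>
      intro e f h0
      rcases Nat.lt_or_ge (mm T e f) (n+1) with h | h
      · exact ih e f (by omega)
      · have hm : mm T e f = n + 1 := by omega
        obtain ⟨x, hx, y, hy, hxy⟩ := mm_spec e f
        have hxne : x ≠ y := by
          intro hh; rw [hh] at hxy; rw [SimpleGraph.dist_self] at hxy; omega
        obtain ⟨x₁, hadj, hstep⟩ := aux_exists_adj_dist hc hxne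
        set g : T.edgeSet := ⟨s(x, x₁), hadj⟩ with hg
        have hxg : x ∈ (g : Sym2 V) := Sym2.mem_mk_left x x₁
        have hx₁g : x₁ ∈ (g : Sym2 V) := Sym2.mem_mk_right x x₁
        have h1 : (SimpleGraph.lineGraph T).Reachable e g := by
          rcases eq_or_ne e g with rfl | hne
          · exact SimpleGraph.Reachable.refl _
          · exact (L_adj hne hx hxg).reachable
        have h2 : (SimpleGraph.lineGraph T).Reachable g f :=
          ih g f (by have := mm_le (T := T) hx₁g hy; omega)
        exact h1.trans h2
  exact key (mm T e f) e f le_rfl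

lemma L_connected (hT : T.IsTree) (e₀ : T.edgeSet) : (SimpleGraph.lineGraph T).Connected := by
  rw [connected_iff]
  exact ⟨fun e f => L_reachable hT e f, ⟨e₀⟩⟩

lemma L_dist_le (hT : T.IsTree) (e f : T.edgeSet) :
    (SimpleGraph.lineGraph T).dist e f ≤ mm T e f + 1 := by
  have hc := hT.isConnected
  have hLc := L_connected hT e
  have key : ∀ n (e f : T.edgeSet), mm T e f ≤ n →
      (SimpleGraph.lineGraph T).dist e f ≤ n + 1 := by
    intro n
    induction n with
    | zero =>
      intro e f h0
      obtain ⟨x, hx, y, hy, hxy⟩ := mm_spec e f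
      have : x = y := hc.dist_eq_zero_iff.1 (by omega)
      subst this
      exact L_dist_le_one hx hy
    | succ n ih =>
      intro e f h0
      rcases Nat.lt_or_ge (mm T e f) (n+1) with h | h
      · have := ih e f (by omega); omega
      · have hm : mm T e f = n + 1 := by omega
        obtain ⟨x, hx, y, hy, hxy⟩ := mm_spec e f
        have hxne : x ≠ y := by
          intro hh; rw [hh] at hxy; rw [SimpleGraph.dist_self] at hxy; omega
        obtain ⟨x₁, hadj, hstep⟩ := aux_exists_adj_dist hc hxne
        set g : T.edgeSet := ⟨s(x, x₁), hadj⟩ with hg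
        have hxg : x ∈ (g : Sym2 V) := Sym2.mem_mk_left x x₁
        have hx₁g : x₁ ∈ (g : Sym2 V) := Sym2.mem_mk_right x x₁
        have h1 : (SimpleGraph.lineGraph T).dist e g ≤ 1 := L_dist_le_one hx hxg
        have h2 : (SimpleGraph.lineGraph T).dist g f ≤ n + 1 :=
          ih g f (by have := mm_le (T := T) hx₁g hy; omega)
        have h3 := hLc.dist_triangle (u := e) (v := g) (w := f)
        omega
  exact key (mm T e f) e f le_rfl

lemma L_dist_ge (hT : T.IsTree) :
    ∀ {e f : T.edgeSet} (p : (SimpleGraph.lineGraph T).Walk e f), e ≠ f →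
      mm T e f + 1 ≤ p.length := by
  have hc := hT.isConnected
  intro e f p
  induction p with
  | nil => intro h; exact absurd rfl h
  | @cons e e₁ f h q ih =>
    intro _
    obtain ⟨hne', z, hz1, hz2⟩ := lineGraph_adj_iff_exists.1 h
    rw [Walk.length_cons]
    rcases eq_or_ne e₁ f with rfl | hef
    · have h5 := mm_le (T := T) hz1 hz2
      rw [SimpleGraph.dist_self] at h5
      omega
    · have h1 := ih hef
      obtain ⟨x₁, hx₁, y, hy, hv⟩ := mm_spec e₁ f
      have h2 : mm T e f ≤ T.dist z y := mm_le hz1 hy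
      have h3 : T.dist z y ≤ T.dist z x₁ + T.dist x₁ y := hc.dist_triangle
      have h4 : T.dist z x₁ ≤ 1 := aux_dist_le_one_of_mem_edge e₁.prop hz2 hx₁
      omega

lemma L_dist_eq (hT : T.IsTree) {e f : T.edgeSet} (hne : e ≠ f) :
    (SimpleGraph.lineGraph T).dist e f = mm T e f + 1 := by
  refine le_antisymm (L_dist_le hT e f) ?_
  obtain ⟨p, hp⟩ := (L_connected hT e).exists_walk_length_eq_dist e f
  rw [← hp]
  exact L_dist_ge hT p hne

lemma L_sep (hT : T.IsTree) {c d : V} (hcd : T.Adj c d) {g : T.edgeSet}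
    (hg : (g : Sym2 V) = s(c,d)) :
    ∀ {e f : T.edgeSet} (p : (SimpleGraph.lineGraph T).Walk e f),
      (∃ x ∈ (e : Sym2 V), T.dist x d = T.dist x c + 1) →
      (∃ y ∈ (f : Sym2 V), T.dist y c = T.dist y d + 1) → g ∈ p.support := by
  intro e f p
  induction p with
  | nil =>
    rintro ⟨x, hx, hxs⟩ ⟨y, hy, hys⟩
    rw [Walk.support_nil, List.mem_singleton]
    have hxy : x ≠ y := by intro hh; rw [hh] at hxs; omega
    have heval := aux_sym2_eq hx hy hxy
    have hadj : T.Adj x y := adj_of_edge heval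
    obtain ⟨hxc, hyd⟩ := tree_cross_edge hT hcd hadj hxs hys
    refine (Subtype.ext ?_).symm
    rw [hg, heval, hxc, hyd]
  | @cons e e₁ f h q ih =>
    rintro ⟨x, hx, hxs⟩ hyf
    rcases eq_or_ne e g with rfl | hne
    · exact Walk.start_mem_support _
    · obtain ⟨hne', z, hz1, hz2⟩ := lineGraph_adj_iff_exists.1 h
      have hzs : T.dist z d = T.dist z c + 1 := by
        rcases tree_dist_adj hT hcd z with hz | hz
        · exact hz
        · exfalso
          have hxz : x ≠ z := by intro hh; rw [hh] at hxs; omega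
          have heval : (e : Sym2 V) = s(x, z) := aux_sym2_eq hx hz1 hxz
          have hadj : T.Adj x z := adj_of_edge heval
          obtain ⟨hxc, hzd⟩ := tree_cross_edge hT hcd hadj hxs hz
          exact hne (Subtype.ext (by rw [hg, heval, hxc, hzd]))
      exact List.mem_cons_of_mem _ (ih ⟨z, hz2, hzs⟩ hyf)

lemma induce_connected_of_pairwise {α : Type*} {G : SimpleGraph α} {S : Set α}
    (hS : S.Nonempty) (h : ∀ a ∈ S, ∀ b ∈ S, a ≠ b → G.Adj a b) :
    (G.induce S).Connected := by
  rw [connected_iff]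
  refine ⟨?_, hS.to_subtype⟩
  intro a b
  rcases eq_or_ne a b with rfl | hab
  · exact SimpleGraph.Reachable.refl _
  · have : G.Adj ↑a ↑b := h ↑a a.2 ↑b b.2 (fun hh => hab (Subtype.ext hh))
    exact SimpleGraph.Adj.reachable this

lemma twoConn_clique_s12 (hT : T.IsTree) {S : Set T.edgeSet}
    (hS : TwoConn (SimpleGraph.lineGraph T) S) :
    ∀ e ∈ S, ∀ f ∈ S, e ≠ f → (SimpleGraph.lineGraph T).Adj e f := by
  have hc := hT.isConnected
  intro e he f hf hne
  by_contra hnadj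
  have hm : 1 ≤ mm T e f := by
    by_contra h0
    obtain ⟨x, hx, y, hy, hxy⟩ := mm_spec e f
    have : x = y := hc.dist_eq_zero_iff.1 (by omega)
    exact hnadj (L_adj hne hx (this ▸ hy))
  obtain ⟨x, hx, y, hy, hxy⟩ := mm_spec e f
  have hxne : x ≠ y := by
    intro hh; rw [hh] at hxy; rw [SimpleGraph.dist_self] at hxy; omega
  obtain ⟨x₁, hadj, hstep⟩ := aux_exists_adj_dist hc hxne
  have hgmem : s(x, x₁) ∈ T.edgeSet := hadj
  set g : T.edgeSet := ⟨s(x, x₁), hgmem⟩ with hgdef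
  have hgval : (g : Sym2 V) = s(x, x₁) := rfl
  have hxg : x ∈ (g : Sym2 V) := Sym2.mem_mk_left x x₁
  have hx₁g : x₁ ∈ (g : Sym2 V) := Sym2.mem_mk_right x x₁
  have heg : e ≠ g := by
    intro hh
    have : mm T e f ≤ T.dist x₁ y := mm_le (hh ▸ hx₁g) hy
    omega
  have hfg : f ≠ g := by
    intro hh
    exact hnadj (L_adj hne hx (hh ▸ hxg))
  have hside_e : ∃ z ∈ (e : Sym2 V), T.dist z x₁ = T.dist z x + 1 := by
    refine ⟨x, hx, ?_⟩
    rw [SimpleGraph.dist_self, SimpleGraph.dist_eq_one_iff_adj.2 hadj]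
  have hside_f : ∃ z ∈ (f : Sym2 V), T.dist z x = T.dist z x₁ + 1 := by
    refine ⟨y, hy, ?_⟩
    have c1 : T.dist y x = T.dist x y := SimpleGraph.dist_comm ..
    have c2 : T.dist y x₁ = T.dist x₁ y := SimpleGraph.dist_comm ..
    omega
  -- g lies on any induced walk from e to f
  have hmain : ∀ (S' : Set T.edgeSet), e ∈ S' → f ∈ S' →
      ((SimpleGraph.lineGraph T).induce S').Connected → g ∈ S' := by
    intro S' he' hf' hcon
    obtain ⟨p0⟩ := hcon.preconnected ⟨e, he'⟩ ⟨f, hf'⟩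
    let ι : ((SimpleGraph.lineGraph T).induce S') →g (SimpleGraph.lineGraph T) :=
      ⟨Subtype.val, fun {a b} hab => hab⟩
    have hgm := L_sep hT hadj hgval (p0.map ι) hside_e hside_f
    rw [Walk.support_map] at hgm
    obtain ⟨u, hu, hu2⟩ := List.mem_map.1 hgm
    exact hu2 ▸ u.2
  have hgS : g ∈ S := hmain S he hf hS.1
  rcases hS.2 g hgS with hemp | hcon
  · have : e ∈ S \ {g} := ⟨he, heg⟩
    rw [hemp] at this
    exact this
  · have : g ∈ S \ {g} := hmain (S \ {g}) ⟨he, heg⟩ ⟨hf, hfg⟩ hcon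
    exact this.2 rfl

lemma twoConn_E (x : V) {e₀ : T.edgeSet} (h₀ : x ∈ (e₀ : Sym2 V)) :
    TwoConn (SimpleGraph.lineGraph T) {e : T.edgeSet | x ∈ (e : Sym2 V)} := by
  constructor
  · exact induce_connected_of_pairwise ⟨e₀, h₀⟩ (fun a ha b hb hab => L_adj hab ha hb)
  · intro v _
    rcases Set.eq_empty_or_nonempty ({e : T.edgeSet | x ∈ (e : Sym2 V)} \ {v}) with hem | hne
    · exact Or.inl hem
    · exact Or.inr (induce_connected_of_pairwise hne
        (fun a ha b hb hab => L_adj hab ha.1 hb.1))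

lemma isBlock_E (hT : T.IsTree) {x : V} {e₁ e₂ : T.edgeSet} (h12 : e₁ ≠ e₂)
    (hx1 : x ∈ (e₁ : Sym2 V)) (hx2 : x ∈ (e₂ : Sym2 V)) :
    IsBlock (SimpleGraph.lineGraph T) {e : T.edgeSet | x ∈ (e : Sym2 V)} := by
  refine ⟨twoConn_E x hx1, ?_⟩
  intro Z hsub hZ
  refine Set.Subset.antisymm ?_ hsub
  intro z hz
  show x ∈ (z : Sym2 V)
  by_contra hxz
  have hz1 : z ≠ e₁ := fun h => hxz (h ▸ hx1)
  have hz2 : z ≠ e₂ := fun h => hxz (h ▸ hx2)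
  have ha1 := twoConn_clique_s12 hT hZ z hz e₁ (hsub hx1) hz1
  have ha2 := twoConn_clique_s12 hT hZ z hz e₂ (hsub hx2) hz2
  obtain ⟨-, t₁, ht₁z, ht₁e⟩ := lineGraph_adj_iff_exists.1 ha1
  obtain ⟨-, t₂, ht₂z, ht₂e⟩ := lineGraph_adj_iff_exists.1 ha2
  have ht₁x : x ≠ t₁ := fun h => hxz (h ▸ ht₁z)
  have ht₂x : x ≠ t₂ := fun h => hxz (h ▸ ht₂z)
  have he₁ : (e₁ : Sym2 V) = s(x, t₁) := aux_sym2_eq hx1 ht₁e ht₁x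
  have he₂ : (e₂ : Sym2 V) = s(x, t₂) := aux_sym2_eq hx2 ht₂e ht₂x
  rcases eq_or_ne t₁ t₂ with rfl | htt
  · exact h12 (Subtype.ext (he₁.trans he₂.symm))
  · have hzval : (z : Sym2 V) = s(t₁, t₂) := aux_sym2_eq ht₁z ht₂z htt
    have hA1 : T.Adj x t₁ := adj_of_edge he₁
    have hA2 : T.Adj x t₂ := adj_of_edge he₂
    have hA3 : T.Adj t₁ t₂ := adj_of_edge hzval
    exact tree_no_triangle hT hA1 hA3 hA2

lemma block_mem_classify (hT : T.IsTree) {c d : V} (hcd : T.Adj c d) {w : T.edgeSet}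
    (hw : (w : Sym2 V) = s(c,d)) {D : Set T.edgeSet}
    (hD : IsBlock (SimpleGraph.lineGraph T) D) (hwD : w ∈ D) :
    D = {e : T.edgeSet | c ∈ (e : Sym2 V)} ∨ D = {e : T.edgeSet | d ∈ (e : Sym2 V)} := by
  have hcw : c ∈ (w : Sym2 V) := by rw [hw]; exact Sym2.mem_mk_left c d
  have hdw : d ∈ (w : Sym2 V) := by rw [hw]; exact Sym2.mem_mk_right c d
  by_cases hall : ∀ f ∈ D, c ∈ (f : Sym2 V)
  · exact Or.inl ((hD.2 _ hall (twoConn_E c hcw)).symm)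
  · push_neg at hall
    obtain ⟨e, heD, hce⟩ := hall
    right
    have hew : e ≠ w := fun h => hce (h ▸ hcw)
    have hadj := twoConn_clique_s12 hT hD.1 e heD w hwD hew
    obtain ⟨-, z, hz1, hz2⟩ := lineGraph_adj_iff_exists.1 hadj
    have hzd : z = d := by
      rw [hw, Sym2.mem_iff] at hz2
      rcases hz2 with rfl | rfl
      · exact absurd hz1 hce
      · rfl
    have hde : d ∈ (e : Sym2 V) := hzd ▸ hz1
    have halld : ∀ f ∈ D, d ∈ (f : Sym2 V) := by
      intro f hfD
      by_contra hdf
      have hfw : f ≠ w := fun h => hdf (h ▸ hdw)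
      have hadjf := twoConn_clique_s12 hT hD.1 f hfD w hwD hfw
      obtain ⟨-, z', hz1', hz2'⟩ := lineGraph_adj_iff_exists.1 hadjf
      have hfc : c ∈ (f : Sym2 V) := by
        rw [hw, Sym2.mem_iff] at hz2'
        rcases hz2' with rfl | rfl
        · exact hz1'
        · exact absurd hz1' hdf
      have hfe : f ≠ e := fun h => hce (h ▸ hfc)
      have hadj2 := twoConn_clique_s12 hT hD.1 f hfD e heD hfe
      obtain ⟨-, t, htf, hte⟩ := lineGraph_adj_iff_exists.1 hadj2
      have htc : c ≠ t := fun h => hce (h ▸ hte)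
      have htd : d ≠ t := fun h => hdf (h ▸ htf)
      have he' : (e : Sym2 V) = s(d, t) := aux_sym2_eq hde hte htd
      have hf' : (f : Sym2 V) = s(c, t) := aux_sym2_eq hfc htf htc
      have hA2 : T.Adj d t := adj_of_edge he'
      have hA3 : T.Adj c t := adj_of_edge hf'
      exact tree_no_triangle hT hcd hA2 hA3
    exact (hD.2 _ halld (twoConn_E d hdw)).symm

end LineAux

section MainAux
variable {V : Type*} [Fintype V] {T : SimpleGraph V}

lemma side_uniform (hT : T.IsTree) {c d : V} (hcd : T.Adj c d) {w : T.edgeSet}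
    (hw : (w : Sym2 V) = s(c, d)) {e : T.edgeSet} (hew : e ≠ w) {x x' : V}
    (hx : x ∈ (e : Sym2 V)) (hx' : x' ∈ (e : Sym2 V))
    (hside : T.dist x c = T.dist x d + 1) : T.dist x' c = T.dist x' d + 1 := by
  rcases tree_dist_adj hT hcd x' with h | h
  · exfalso
    have hxx : x' ≠ x := by intro hh; rw [hh] at h; omega
    have heval : (e : Sym2 V) = s(x', x) := aux_sym2_eq hx' hx hxx
    have hadj : T.Adj x' x := adj_of_edge heval
    obtain ⟨h1, h2⟩ := tree_cross_edge hT hcd hadj h hside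
    exact hew (Subtype.ext (by rw [heval, h1, h2, hw]))
  · exact h

/-- The near endpoint `c` of the central edge has degree at least 2. -/
lemma deg_c (hT : T.IsTree) {r c d : V} (hcd : T.Adj c d)
    (hdep : T.dist r d = T.dist r c + 1) (hrT : weightCenters T = {r}) :
    ∃ z, T.Adj c z ∧ z ≠ d := by
  have hc := hT.isConnected
  have hrmin : ∀ u, wt T r ≤ wt T u := by
    have h : r ∈ weightCenters T := by rw [hrT]; rfl
    exact h
  by_cases hcr : c = r
  · by_contra hno
    push_neg at hno
    have hrd : T.Adj r d := hcr ▸ hcd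
    have hsub : ∀ u : V, u ≠ r → u ≠ d → T.dist u d ≤ T.dist u r := by
      intro u hur hud
      obtain ⟨z, hz, hstep⟩ := aux_exists_adj_dist hc (Ne.symm hur)
      have hzd : z = d := hno z (by rw [hcr]; exact hz)
      rw [hzd] at hstep
      have c1 : T.dist u d = T.dist d u := SimpleGraph.dist_comm ..
      have c2 : T.dist u r = T.dist r u := SimpleGraph.dist_comm ..
      omega
    have hwt : wt T d ≤ wt T r := by
      unfold wt
      rw [← Equiv.sum_comp (Equiv.swap r d) (fun u => T.dist u d)]
      refine Finset.sum_le_sum ?_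
      intro u _
      rcases eq_or_ne u r with rfl | hur
      · rw [Equiv.swap_apply_left]
        simp [SimpleGraph.dist_self]
      · rcases eq_or_ne u d with rfl | hud
        · rw [Equiv.swap_apply_right]
          exact (SimpleGraph.dist_comm ..).le
        · rw [Equiv.swap_apply_of_ne_of_ne hur hud]
          exact hsub u hur hud
    have hdmem : d ∈ weightCenters T := fun u => le_trans hwt (hrmin u)
    rw [hrT] at hdmem
    exact hrd.ne hdmem.symm
  · obtain ⟨z, hz, hstep⟩ := aux_exists_adj_dist hc hcr
    refine ⟨z, hz, ?_⟩
    intro hzd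
    rw [hzd] at hstep
    have c1 : T.dist c r = T.dist r c := SimpleGraph.dist_comm ..
    have c2 : T.dist d r = T.dist r d := SimpleGraph.dist_comm ..
    omega

/-- The far endpoint `d` of the central edge has degree at least 2. -/
lemma deg_d (hT : T.IsTree) {c d : V} (hcd : T.Adj c d) {w : T.edgeSet}
    (hw : (w : Sym2 V) = s(c, d))
    (hwL : weightCenters (SimpleGraph.lineGraph T) = {w})
    {z₀ : V} (hz₀ : T.Adj c z₀) (hz₀d : z₀ ≠ d) :
    ∃ z, T.Adj d z ∧ z ≠ c := by
  have hLc := L_connected hT w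
  have hwmin : ∀ u, wt (SimpleGraph.lineGraph T) w ≤ wt (SimpleGraph.lineGraph T) u := by
    have h : w ∈ weightCenters (SimpleGraph.lineGraph T) := by rw [hwL]; rfl
    exact h
  by_contra hno
  push_neg at hno
  have hgmem : s(c, z₀) ∈ T.edgeSet := hz₀
  set u₀ : T.edgeSet := ⟨s(c, z₀), hgmem⟩ with hu₀def
  have hcu₀ : c ∈ (u₀ : Sym2 V) := Sym2.mem_mk_left c z₀
  have hu₀w : u₀ ≠ w := by
    intro hh
    have h2 : (u₀ : Sym2 V) = (w : Sym2 V) := congrArg Subtype.val hh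
    rw [hw] at h2
    exact hz₀d (Sym2.congr_right.1 h2)
  have hnb : ∀ e : T.edgeSet, (SimpleGraph.lineGraph T).Adj w e → c ∈ (e : Sym2 V) := by
    intro e hadj
    obtain ⟨hne, z, hzw, hze⟩ := lineGraph_adj_iff_exists.1 hadj
    rw [hw, Sym2.mem_iff] at hzw
    rcases hzw with rfl | rfl
    · exact hze
    · exfalso
      obtain ⟨t, ht⟩ := Sym2.mem_iff_exists.1 hze
      have htc : t = c := hno t (adj_of_edge ht)
      refine hne (Subtype.ext ?_).symm
      rw [ht, htc, Sym2.eq_swap, ← hw]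
  have hle : ∀ x : T.edgeSet, x ≠ w → x ≠ u₀ →
      (SimpleGraph.lineGraph T).dist x u₀ ≤ (SimpleGraph.lineGraph T).dist x w := by
    intro x hxw _
    obtain ⟨e₁, hadj, hstep⟩ := aux_exists_adj_dist hLc (Ne.symm hxw)
    have hce₁ : c ∈ (e₁ : Sym2 V) := hnb e₁ hadj
    have h1 : (SimpleGraph.lineGraph T).dist e₁ u₀ ≤ 1 := L_dist_le_one hce₁ hcu₀
    have h2 : (SimpleGraph.lineGraph T).dist x u₀ ≤
        (SimpleGraph.lineGraph T).dist x e₁ + (SimpleGraph.lineGraph T).dist e₁ u₀ :=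
      hLc.dist_triangle
    have c1 : (SimpleGraph.lineGraph T).dist x e₁ = (SimpleGraph.lineGraph T).dist e₁ x :=
      SimpleGraph.dist_comm ..
    have c2 : (SimpleGraph.lineGraph T).dist w x = (SimpleGraph.lineGraph T).dist x w :=
      SimpleGraph.dist_comm ..
    omega
  have hwt : wt (SimpleGraph.lineGraph T) u₀ ≤ wt (SimpleGraph.lineGraph T) w := by
    unfold wt
    rw [← Equiv.sum_comp (Equiv.swap w u₀) (fun u => (SimpleGraph.lineGraph T).dist u u₀)]
    refine Finset.sum_le_sum ?_
    intro x _
    rcases eq_or_ne x w with rfl | hxw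
    · rw [Equiv.swap_apply_left]
      simp [SimpleGraph.dist_self]
    · rcases eq_or_ne x u₀ with rfl | hxu
      · rw [Equiv.swap_apply_right]
        exact (SimpleGraph.dist_comm ..).le
      · rw [Equiv.swap_apply_of_ne_of_ne hxw hxu]
        exact hle x hxw hxu
  have humem : u₀ ∈ weightCenters (SimpleGraph.lineGraph T) :=
    fun u => le_trans hwt (hwmin u)
  rw [hwL] at humem
  exact hu₀w humem

lemma branch_set_eq (hT : T.IsTree) {a b : V} (hab : T.Adj a b) {w : T.edgeSet}
    (hw : (w : Sym2 V) = s(a, b)) :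
    {v : T.edgeSet | ∃ u : T.edgeSet, b ∈ (u : Sym2 V) ∧ u ≠ w ∧
        (SimpleGraph.lineGraph T).dist w v =
          (SimpleGraph.lineGraph T).dist w u + (SimpleGraph.lineGraph T).dist u v}
      = {v : T.edgeSet | v ≠ w ∧ ∀ x ∈ (v : Sym2 V), T.dist x a = T.dist x b + 1} := by
  have hc := hT.isConnected
  have hLc := L_connected hT w
  have haw : a ∈ (w : Sym2 V) := by rw [hw]; exact Sym2.mem_mk_left a b
  have hbw : b ∈ (w : Sym2 V) := by rw [hw]; exact Sym2.mem_mk_right a b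
  have hba : T.dist b a = T.dist b b + 1 := by
    rw [SimpleGraph.dist_self, SimpleGraph.dist_eq_one_iff_adj.2 hab.symm]
  ext v
  simp only [Set.mem_setOf_eq]
  constructor
  · rintro ⟨u, hbu, huw, heq⟩
    have hwadj : (SimpleGraph.lineGraph T).Adj w u := L_adj (Ne.symm huw) hbw hbu
    have hwu : (SimpleGraph.lineGraph T).dist w u = 1 :=
      SimpleGraph.dist_eq_one_iff_adj.2 hwadj
    have hvw : v ≠ w := by
      intro hh
      rw [hh] at heq
      rw [SimpleGraph.dist_self, hwu] at heq
      omega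
    refine ⟨hvw, ?_⟩
    intro x' hx'
    by_contra hns
    have hxside : T.dist x' b = T.dist x' a + 1 := by
      rcases tree_dist_adj hT hab x' with h | h
      · exact h
      · exact absurd h hns
    have hsplit : (SimpleGraph.lineGraph T).dist v u =
        (SimpleGraph.lineGraph T).dist v w + (SimpleGraph.lineGraph T).dist w u :=
      aux_dist_split hLc (fun p => L_sep hT hab hw p ⟨x', hx', hxside⟩ ⟨b, hbu, hba⟩)
    have c1 : (SimpleGraph.lineGraph T).dist u v = (SimpleGraph.lineGraph T).dist v u :=
      SimpleGraph.dist_comm ..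
    have c2 : (SimpleGraph.lineGraph T).dist v w = (SimpleGraph.lineGraph T).dist w v :=
      SimpleGraph.dist_comm ..
    omega
  · rintro ⟨hvw, hall⟩
    have key : ∀ p q : V, (v : Sym2 V) = s(p, q) → T.dist b q ≤ T.dist b p →
        ∃ u : T.edgeSet, b ∈ (u : Sym2 V) ∧ u ≠ w ∧
          (SimpleGraph.lineGraph T).dist w v =
            (SimpleGraph.lineGraph T).dist w u + (SimpleGraph.lineGraph T).dist u v := by
      intro p q hv hle
      have hqv : q ∈ (v : Sym2 V) := by rw [hv]; exact Sym2.mem_mk_right p q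
      have hpv : p ∈ (v : Sym2 V) := by rw [hv]; exact Sym2.mem_mk_left p q
      rcases Nat.eq_zero_or_pos (T.dist b q) with hq0 | hq1
      · have hbq : b = q := hc.dist_eq_zero_iff.1 hq0
        refine ⟨v, hbq ▸ hqv, hvw, ?_⟩
        rw [SimpleGraph.dist_self]
        omega
      · have hbq : b ≠ q := by
          intro hh
          rw [hh, SimpleGraph.dist_self] at hq1
          omega
        obtain ⟨z, hbz, hstep⟩ := aux_exists_adj_dist hc hbq
        have humem : s(b, z) ∈ T.edgeSet := hbz
        set u : T.edgeSet := ⟨s(b, z), humem⟩ with hudef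
        have hbu : b ∈ (u : Sym2 V) := Sym2.mem_mk_left b z
        have hzu : z ∈ (u : Sym2 V) := Sym2.mem_mk_right b z
        have hqs : T.dist q a = T.dist q b + 1 := hall q hqv
        have hps : T.dist p a = T.dist p b + 1 := hall p hpv
        have huw : u ≠ w := by
          intro hh
          have h2 : (u : Sym2 V) = s(a, b) := by rw [← hw]; exact congrArg Subtype.val hh
          rw [Sym2.eq_iff] at h2
          have hza : z = a := by
            rcases h2 with ⟨h3, h4⟩ | ⟨h3, h4⟩
            · exact absurd h3 hab.ne'
            · exact h4
          rw [hza] at hstep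
          have c1 : T.dist q a = T.dist a q := SimpleGraph.dist_comm ..
          have c2 : T.dist q b = T.dist b q := SimpleGraph.dist_comm ..
          omega
        have hbv : b ∉ (v : Sym2 V) := by
          intro hh
          rw [hv, Sym2.mem_iff] at hh
          rcases hh with rfl | rfl
          · rw [SimpleGraph.dist_self] at hle
            omega
          · exact hbq rfl
        have hvu : v ≠ u := by
          intro hh
          exact hbv (hh ▸ hbu)
        have hm1 : mm T w v = T.dist b q := by
          refine le_antisymm (mm_le hbw hqv) (le_mm ?_)
          intro x hxw y hyv
          rw [hw, Sym2.mem_iff] at hxw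
          rw [hv, Sym2.mem_iff] at hyv
          have hys : T.dist y a = T.dist y b + 1 := by
            rcases hyv with rfl | rfl
            · exact hps
            · exact hqs
          have hyb : T.dist b q ≤ T.dist b y := by
            rcases hyv with rfl | rfl
            · exact hle
            · exact le_rfl
          have c1 : T.dist y b = T.dist b y := SimpleGraph.dist_comm ..
          have c2 : T.dist y a = T.dist a y := SimpleGraph.dist_comm ..
          rcases hxw with rfl | rfl
          · omega
          · omega
        have hm2 : mm T u v = T.dist z q := by
          refine le_antisymm (mm_le hzu hqv) (le_mm ?_)
          intro x hxu y hyv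
          have hxu' : x ∈ (s(b, z) : Sym2 V) := hxu
          rw [Sym2.mem_iff] at hxu'
          rw [hv, Sym2.mem_iff] at hyv
          have hyb : T.dist b q ≤ T.dist b y := by
            rcases hyv with rfl | rfl
            · exact hle
            · exact le_rfl
          have htr : T.dist b y ≤ 1 + T.dist z y := by
            have h3 : T.dist b y ≤ T.dist b z + T.dist z y := hc.dist_triangle
            have h4 : T.dist b z = 1 := SimpleGraph.dist_eq_one_iff_adj.2 hbz
            omega
          rcases hxu' with rfl | rfl
          · omega
          · omega
        have hd1 : (SimpleGraph.lineGraph T).dist w v = T.dist b q + 1 := by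
          rw [L_dist_eq hT (Ne.symm hvw), hm1]
        have hd2 : (SimpleGraph.lineGraph T).dist u v = T.dist z q + 1 := by
          rw [L_dist_eq hT (Ne.symm hvu), hm2]
        have hd3 : (SimpleGraph.lineGraph T).dist w u = 1 :=
          SimpleGraph.dist_eq_one_iff_adj.2 (L_adj (Ne.symm huw) hbw hbu)
        exact ⟨u, hbu, huw, by omega⟩
    obtain ⟨p, q, hv⟩ := aux_sym2_exists (v : Sym2 V)
    rcases le_total (T.dist b q) (T.dist b p) with h | h
    · exact key p q hv h
    · exact key q p (hv.trans Sym2.eq_swap) h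

end MainAux



/-- for a tree `T` with `|W(T)| = |W(𝓛(T))| = 1`, `W(𝓛(T)) = {w}`:
(i) the branches of `𝓛(T)` (at its unique central vertex `w`) are exactly `B(T) - w` and
`𝓛(T) - B(T)`; and (ii) `|B(T)| ≤ ⌊(|V(T)|-1)/2⌋`. -/
theorem stmt12 {V : Type*} [Fintype V] (T : SimpleGraph V) (hT : T.IsTree)
    (r : V) (w : T.edgeSet)
    (hrT : weightCenters T = {r})
    (hwL : weightCenters (SimpleGraph.lineGraph T) = {w}) :
    ({S : Set T.edgeSet |
        (∃ D : Set T.edgeSet, S = {v | InBranch (SimpleGraph.lineGraph T) w D v}) ∧ S ≠ ∅}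
      = {edgeDescSet T r w \ {w}, (edgeDescSet T r w)ᶜ}) ∧
    (edgeDescSet T r w).ncard ≤ (Fintype.card V - 1) / 2 := by
  classical
  have hc := hT.isConnected
  obtain ⟨c, d, hcd, hwval, hdep⟩ :
      ∃ c d, T.Adj c d ∧ (w : Sym2 V) = s(c, d) ∧ T.dist r d = T.dist r c + 1 := by
    obtain ⟨c₀, d₀, hw₀⟩ := aux_sym2_exists (w : Sym2 V)
    have hadj₀ : T.Adj c₀ d₀ := adj_of_edge hw₀
    rcases tree_dist_adj hT hadj₀ r with h | h
    · exact ⟨c₀, d₀, hadj₀, hw₀, h⟩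
    · exact ⟨d₀, c₀, hadj₀.symm, hw₀.trans Sym2.eq_swap, h⟩
  have hLc := L_connected hT w
  have hcw : c ∈ (w : Sym2 V) := by rw [hwval]; exact Sym2.mem_mk_left c d
  have hdw : d ∈ (w : Sym2 V) := by rw [hwval]; exact Sym2.mem_mk_right c d
  obtain ⟨z₀, hz₀, hz₀d⟩ := deg_c hT hcd hdep hrT
  obtain ⟨z₁, hz₁, hz₁c⟩ := deg_d hT hcd hwval hwL hz₀ hz₀d
  have hu₀mem : s(c, z₀) ∈ T.edgeSet := hz₀
  have hu₁mem : s(d, z₁) ∈ T.edgeSet := hz₁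
  set u₀ : T.edgeSet := ⟨s(c, z₀), hu₀mem⟩ with hu₀def
  set u₁ : T.edgeSet := ⟨s(d, z₁), hu₁mem⟩ with hu₁def
  have hcu₀ : c ∈ (u₀ : Sym2 V) := Sym2.mem_mk_left c z₀
  have hz₀u₀ : z₀ ∈ (u₀ : Sym2 V) := Sym2.mem_mk_right c z₀
  have hdu₁ : d ∈ (u₁ : Sym2 V) := Sym2.mem_mk_left d z₁
  have hz₁u₁ : z₁ ∈ (u₁ : Sym2 V) := Sym2.mem_mk_right d z₁
  have hu₀w : u₀ ≠ w := by
    intro hh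
    have h2 : (u₀ : Sym2 V) = s(c, d) := by rw [← hwval]; exact congrArg Subtype.val hh
    exact hz₀d (Sym2.congr_right.1 h2)
  have hu₁w : u₁ ≠ w := by
    intro hh
    have h2 : (u₁ : Sym2 V) = s(c, d) := by rw [← hwval]; exact congrArg Subtype.val hh
    rw [Sym2.eq_iff] at h2
    rcases h2 with ⟨h3, _⟩ | ⟨_, h4⟩
    · exact hcd.ne h3.symm
    · exact hz₁c h4
  have hsd : T.dist d c = T.dist d d + 1 := by
    rw [SimpleGraph.dist_self, SimpleGraph.dist_eq_one_iff_adj.2 hcd.symm]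
  have hsc : T.dist c d = T.dist c c + 1 := by
    rw [SimpleGraph.dist_self, SimpleGraph.dist_eq_one_iff_adj.2 hcd]
  have hz₁side : T.dist z₁ c = T.dist z₁ d + 1 := by
    rcases tree_dist_adj hT hcd z₁ with h | h
    · exact absurd (tree_cross_edge hT hcd hz₁.symm h hsd).1 hz₁c
    · exact h
  have hz₀side : T.dist z₀ d = T.dist z₀ c + 1 := by
    rcases tree_dist_adj hT hcd z₀ with h | h
    · exact h
    · exact absurd (tree_cross_edge hT hcd hz₀ hsc h).2 hz₀d
  have hcent : ∀ x : T.edgeSet, IsCentral (SimpleGraph.lineGraph T) x ↔ x = w := by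
    intro x
    constructor
    · rintro (h | ⟨h2, _⟩)
      · have h3 := hwL.symm.trans h
        exact (Set.singleton_eq_singleton_iff.1 h3).symm
      · rw [hwL, Set.ncard_singleton] at h2
        omega
    · rintro rfl
      exact Or.inl hwL
  have hncb : ∀ D : Set T.edgeSet, ¬ IsCentralBlock (SimpleGraph.lineGraph T) D := by
    rintro D ⟨_, h2, _⟩
    rw [hwL, Set.ncard_singleton] at h2
    omega
  have hIB : ∀ (D : Set T.edgeSet) (v : T.edgeSet),
      InBranch (SimpleGraph.lineGraph T) w D v ↔
        IsBlock (SimpleGraph.lineGraph T) D ∧ w ∈ D ∧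
          ∃ u, u ∈ D ∧ u ≠ w ∧ (SimpleGraph.lineGraph T).dist w v =
            (SimpleGraph.lineGraph T).dist w u + (SimpleGraph.lineGraph T).dist u v := by
    intro D v
    constructor
    · rintro ⟨_, hbl, hwD, _, u, huD, huw, hanc⟩
      obtain ⟨w', hw', hgeo⟩ := hanc
      rw [hcent w'] at hw'
      subst hw'
      exact ⟨hbl, hwD, u, huD, huw, hgeo⟩
    · rintro ⟨hbl, hwD, u, huD, huw, hgeo⟩
      exact ⟨Or.inl hwL, hbl, hwD, hncb D, u, huD, huw, w, Or.inl hwL, hgeo⟩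
  have hEcblock : IsBlock (SimpleGraph.lineGraph T) {e : T.edgeSet | c ∈ (e : Sym2 V)} :=
    isBlock_E hT hu₀w hcu₀ hcw
  have hEdblock : IsBlock (SimpleGraph.lineGraph T) {e : T.edgeSet | d ∈ (e : Sym2 V)} :=
    isBlock_E hT hu₁w hdu₁ hdw
  have hBd := branch_set_eq hT hcd hwval
  have hBc := branch_set_eq hT hcd.symm (hwval.trans Sym2.eq_swap)
  have hbr : ∀ (x : V), x ∈ (w : Sym2 V) →
      IsBlock (SimpleGraph.lineGraph T) {e : T.edgeSet | x ∈ (e : Sym2 V)} →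
      {v | InBranch (SimpleGraph.lineGraph T) w {e : T.edgeSet | x ∈ (e : Sym2 V)} v} =
      {v : T.edgeSet | ∃ u : T.edgeSet, x ∈ (u : Sym2 V) ∧ u ≠ w ∧
          (SimpleGraph.lineGraph T).dist w v =
            (SimpleGraph.lineGraph T).dist w u + (SimpleGraph.lineGraph T).dist u v} := by
    intro x hx hblk
    ext v
    constructor
    · intro hv
      obtain ⟨_, _, u, huD, huw, hgeo⟩ := (hIB _ v).1 hv
      exact ⟨u, huD, huw, hgeo⟩
    · rintro ⟨u, huD, huw, hgeo⟩
      exact (hIB _ v).2 ⟨hblk, hx, u, huD, huw, hgeo⟩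
  have hdesc : ∀ x : V, (T.dist x c = T.dist x d + 1) ↔
      T.dist r x = T.dist r d + T.dist d x := fun x => tree_desc_iff hT hcd hdep x
  have hA : edgeDescSet T r w =
      {v : T.edgeSet | v = w ∨ ∀ x ∈ (v : Sym2 V), T.dist x c = T.dist x d + 1} := by
    ext e
    simp only [edgeDescSet, Set.mem_setOf_eq]
    constructor
    · rintro (rfl | ⟨x, hx, hy⟩)
      · exact Or.inl rfl
      · rcases eq_or_ne e w with rfl | hew
        · exact Or.inl rfl
        · right
          have hxside : T.dist x c = T.dist x d + 1 := (hdesc x).2 (hy d hdw)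
          exact fun x' hx' => side_uniform hT hcd hwval hew hx hx' hxside
    · rintro (rfl | hall)
      · exact Or.inl rfl
      · right
        obtain ⟨x, y, he⟩ := aux_sym2_exists (e : Sym2 V)
        have hxe : x ∈ (e : Sym2 V) := by rw [he]; exact Sym2.mem_mk_left x y
        refine ⟨x, hxe, ?_⟩
        have hDd : T.dist r x = T.dist r d + T.dist d x := (hdesc x).1 (hall x hxe)
        intro y' hy'
        rw [hwval, Sym2.mem_iff] at hy'
        rcases hy' with rfl | rfl
        · have h1 : T.dist y' x ≤ T.dist y' d + T.dist d x := hc.dist_triangle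
          have h2 : T.dist r x ≤ T.dist r y' + T.dist y' x := hc.dist_triangle
          have h3 : T.dist y' d = 1 := SimpleGraph.dist_eq_one_iff_adj.2 hcd
          omega
        · exact hDd
  have hAw : edgeDescSet T r w \ {w} =
      {v : T.edgeSet | v ≠ w ∧ ∀ x ∈ (v : Sym2 V), T.dist x c = T.dist x d + 1} := by
    rw [hA]
    ext v
    simp only [Set.mem_diff, Set.mem_setOf_eq, Set.mem_singleton_iff]
    tauto
  have hAc : (edgeDescSet T r w)ᶜ =
      {v : T.edgeSet | v ≠ w ∧ ∀ x ∈ (v : Sym2 V), T.dist x d = T.dist x c + 1} := by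
    rw [hA]
    ext v
    simp only [Set.mem_compl_iff, Set.mem_setOf_eq, not_or]
    constructor
    · rintro ⟨hvw, hnall⟩
      push_neg at hnall
      obtain ⟨x, hxv, hxn⟩ := hnall
      have hxside : T.dist x d = T.dist x c + 1 := by
        rcases tree_dist_adj hT hcd x with h | h
        · exact h
        · exact absurd h hxn
      exact ⟨hvw, fun x' hx' =>
        side_uniform hT hcd.symm (hwval.trans Sym2.eq_swap) hvw hxv hx' hxside⟩
    · rintro ⟨hvw, hall2⟩
      refine ⟨hvw, ?_⟩
      intro hall
      obtain ⟨x, y, he⟩ := aux_sym2_exists (v : Sym2 V)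
      have hxe : x ∈ (v : Sym2 V) := by rw [he]; exact Sym2.mem_mk_left x y
      have := hall x hxe
      have := hall2 x hxe
      omega
  constructor
  · ext S
    simp only [Set.mem_setOf_eq, Set.mem_insert_iff, Set.mem_singleton_iff]
    constructor
    · rintro ⟨⟨D, rfl⟩, hSne⟩
      obtain ⟨v₀, hv₀⟩ := Set.nonempty_iff_ne_empty.2 hSne
      obtain ⟨hblk, hwD, -⟩ := (hIB D v₀).1 hv₀
      rcases block_mem_classify hT hcd hwval hblk hwD with hD | hD
      · right
        subst hD
        rw [hbr c hcw hEcblock, hAc]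
        exact hBc
      · left
        subst hD
        rw [hbr d hdw hEdblock, hAw]
        exact hBd
    · rintro (rfl | rfl)
      · refine ⟨⟨{e : T.edgeSet | d ∈ (e : Sym2 V)}, ?_⟩, ?_⟩
        · rw [hbr d hdw hEdblock, hAw]
          exact hBd.symm
        · apply Set.nonempty_iff_ne_empty.1
          rw [hAw]
          refine ⟨u₁, hu₁w, ?_⟩
          intro x hx
          have hx' : x ∈ (s(d, z₁) : Sym2 V) := hx
          rw [Sym2.mem_iff] at hx'
          rcases hx' with rfl | rfl
          · exact hsd
          · exact hz₁side
      · refine ⟨⟨{e : T.edgeSet | c ∈ (e : Sym2 V)}, ?_⟩, ?_⟩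
        · rw [hbr c hcw hEcblock, hAc]
          exact hBc.symm
        · apply Set.nonempty_iff_ne_empty.1
          rw [hAc]
          refine ⟨u₀, hu₀w, ?_⟩
          intro x hx
          have hx' : x ∈ (s(c, z₀) : Sym2 V) := hx
          rw [Sym2.mem_iff] at hx'
          rcases hx' with rfl | rfl
          · exact hsc
          · exact hz₀side
  · -- part (ii)
    have hdeep : ∀ e : T.edgeSet, ∃ qp : V × V, (e : Sym2 V) = s(qp.2, qp.1) ∧
        T.dist r qp.1 = T.dist r qp.2 + 1 := by
      intro e
      obtain ⟨x, y, he⟩ := aux_sym2_exists (e : Sym2 V)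
      have hadj : T.Adj x y := adj_of_edge he
      rcases tree_dist_adj hT hadj r with h | h
      · exact ⟨(y, x), he, h⟩
      · exact ⟨(x, y), he.trans Sym2.eq_swap, h⟩
    set f : T.edgeSet → V := fun e => (hdeep e).choose.1 with hfdef
    have hfspec : ∀ e : T.edgeSet, (e : Sym2 V) = s((hdeep e).choose.2, f e) ∧
        T.dist r (f e) = T.dist r (hdeep e).choose.2 + 1 := fun e => (hdeep e).choose_spec
    have hmapsTo : ∀ e ∈ edgeDescSet T r w,
        f e ∈ {x : V | T.dist r x = T.dist r d + T.dist d x} := by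
      intro e he
      rw [hA] at he
      obtain ⟨hval, hdepth⟩ := hfspec e
      rcases he with rfl | hall
      · have h2 : s((hdeep e).choose.2, f e) = s(c, d) := by rw [← hval, hwval]
        rw [Sym2.eq_iff] at h2
        have hfd : f e = d := by
          rcases h2 with ⟨h3, h4⟩ | ⟨h3, h4⟩
          · exact h4
          · exfalso; rw [h3, h4] at hdepth; omega
        show T.dist r (f e) = T.dist r d + T.dist d (f e)
        rw [hfd, SimpleGraph.dist_self]
        omega
      · have hfe : f e ∈ (e : Sym2 V) := by rw [hval]; exact Sym2.mem_mk_right _ _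
        exact (hdesc (f e)).1 (hall (f e) hfe)
    have hinj : Set.InjOn f (edgeDescSet T r w) := by
      intro e₁ h₁ e₂ h₂ hf
      obtain ⟨hval₁, hdep₁⟩ := hfspec e₁
      obtain ⟨hval₂, hdep₂⟩ := hfspec e₂
      have hadj₁ : T.Adj (hdeep e₁).choose.2 (f e₁) := adj_of_edge hval₁
      have hadj₂ : T.Adj (hdeep e₂).choose.2 (f e₂) := adj_of_edge hval₂
      rw [← hf] at hadj₂ hdep₂
      have hpar := tree_unique_parent hT hadj₁ hadj₂ hdep₁ hdep₂
      refine Subtype.ext ?_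
      rw [hval₁, hval₂, hpar, hf]
    have h1 : (edgeDescSet T r w).ncard ≤
        ({x : V | T.dist r x = T.dist r d + T.dist d x}).ncard :=
      Set.ncard_le_ncard_of_injOn f hmapsTo hinj (Set.toFinite _)
    have hrd : r ≠ d := by
      intro hh
      rw [← hh, SimpleGraph.dist_self] at hdep
      omega
    obtain ⟨n₀, hn₀, hstep₀⟩ := aux_exists_adj_dist hc hrd
    have hrn₀ : T.dist r n₀ = 1 := SimpleGraph.dist_eq_one_iff_adj.2 hn₀
    have hsub : {x : V | T.dist r x = T.dist r d + T.dist d x} ⊆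
        {x : V | T.dist r x = T.dist r n₀ + T.dist n₀ x} := by
      intro x hx
      have hx' : T.dist r x = T.dist r d + T.dist d x := hx
      have h3 : T.dist n₀ x ≤ T.dist n₀ d + T.dist d x := hc.dist_triangle
      have h4 : T.dist r x ≤ T.dist r n₀ + T.dist n₀ x := hc.dist_triangle
      show T.dist r x = T.dist r n₀ + T.dist n₀ x
      omega
    have h2 : ({x : V | T.dist r x = T.dist r d + T.dist d x}).ncard ≤
        ({x : V | T.dist r x = T.dist r n₀ + T.dist n₀ x}).ncard :=
      Set.ncard_le_ncard hsub (Set.toFinite _)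
    have hrmin : ∀ u, wt T r ≤ wt T u := by
      have h : r ∈ weightCenters T := by rw [hrT]; rfl
      exact h
    have hwtlt : wt T r + 1 ≤ wt T n₀ := by
      rcases Nat.lt_or_ge (wt T r) (wt T n₀) with h | h
      · omega
      · exfalso
        have hmem : n₀ ∈ weightCenters T := fun u => le_trans h (hrmin u)
        rw [hrT] at hmem
        exact hn₀.ne hmem.symm
    have hterm : ∀ v : V, (T.dist v n₀ : ℤ) = (T.dist v r : ℤ) + 1 -
        2 * (if v ∈ {x : V | T.dist r x = T.dist r n₀ + T.dist n₀ x} then 1 else 0) := by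
      intro v
      have c1 : T.dist v n₀ = T.dist n₀ v := SimpleGraph.dist_comm ..
      have c2 : T.dist v r = T.dist r v := SimpleGraph.dist_comm ..
      rcases tree_dist_adj hT hn₀ v with h | h
      · have hns : v ∉ {x : V | T.dist r x = T.dist r n₀ + T.dist n₀ x} := by
          intro hv
          have hv' : T.dist r v = T.dist r n₀ + T.dist n₀ v := hv
          omega
        rw [if_neg hns]
        push_cast
        omega
      · have hs : v ∈ {x : V | T.dist r x = T.dist r n₀ + T.dist n₀ x} := by
          show T.dist r v = T.dist r n₀ + T.dist n₀ v
          omega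
        rw [if_pos hs]
        push_cast
        omega
    have hsum2 : ∑ v : V, (if v ∈ {x : V | T.dist r x = T.dist r n₀ + T.dist n₀ x}
        then (1 : ℤ) else 0) =
        (({x : V | T.dist r x = T.dist r n₀ + T.dist n₀ x}).ncard : ℤ) := by
      rw [Finset.sum_boole, Set.ncard_eq_toFinset_card']
      norm_cast
      congr 1
      ext x
      simp [Set.mem_toFinset]
    have hsum : (wt T n₀ : ℤ) = (wt T r : ℤ) + (Fintype.card V : ℤ) -
        2 * (({x : V | T.dist r x = T.dist r n₀ + T.dist n₀ x}).ncard : ℤ) := by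
      have hw1 : (wt T n₀ : ℤ) = ∑ v : V, (T.dist v n₀ : ℤ) := by
        unfold wt; push_cast; rfl
      have hw2 : (wt T r : ℤ) = ∑ v : V, (T.dist v r : ℤ) := by
        unfold wt; push_cast; rfl
      rw [hw1, Finset.sum_congr rfl (fun v _ => hterm v)]
      rw [Finset.sum_sub_distrib, Finset.sum_add_distrib, ← Finset.mul_sum, hsum2, hw2]
      simp [Finset.card_univ]
    have hfin : 2 * ({x : V | T.dist r x = T.dist r n₀ + T.dist n₀ x}).ncard + 1 ≤
        Fintype.card V := by
      have hz : (wt T r : ℤ) + 1 ≤ (wt T n₀ : ℤ) := by exact_mod_cast hwtlt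
      rw [hsum] at hz
      have hz2 : 2 * (({x : V | T.dist r x = T.dist r n₀ + T.dist n₀ x}).ncard : ℤ) + 1 ≤
          (Fintype.card V : ℤ) := by omega
      exact_mod_cast hz2
    omega


end RadioLabeling
end
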